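/- arXiv:2309.01980 — 5 statements merged into one kernel-verified Lean document; each statement's English description precedes it below -/
import Mathlib

section
/- Let h : ℝ^m → ℝ ∪ {∞} be proper, lower semicontinuous, and prox-bounded, and assume that dom h is closed. Then for every z̄ ∈ ℝ^m, the joint limit as z' → z̄ and μ ↓ 0 of inf_{z ∈ dom h} { μ·h(z) + ½‖z − z'‖² } exists and equals ½·dist(z̄, dom h)². -/
open Filter Topology Bornology

noncomputable section

/-- Euclidean space `ℝ^d`. -/
abbrev Euc (d : ℕ) := EuclideanSpace ℝ (Fin d)

namespace Paper

variable {n m : ℕ}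

/-- The effective domain of an extended-real-valued function. -/
def edom (g : Euc m → EReal) : Set (Euc m) := {z | g z < ⊤}

/-- `g` maps into `ℝ ∪ {∞}` and is proper (its domain is nonempty). -/
def ProperFn (g : Euc m → EReal) : Prop := (∀ z, g z ≠ ⊥) ∧ ∃ z, g z < ⊤

/-- `z ↦ g z + ‖z‖²/(2μ)` is bounded below. -/
def ProxBoundedWith (g : Euc m → EReal) (μ : ℝ) : Prop :=
  ∃ b : ℝ, ∀ z, (b : EReal) ≤ g z + ((‖z‖ ^ 2 / (2 * μ) : ℝ) : EReal)

/-- `g` is prox-bounded. -/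
def ProxBounded (g : Euc m → EReal) : Prop := ∃ μ : ℝ, 0 < μ ∧ ProxBoundedWith g μ

/-- `0 < μ < μ_g`, where `μ_g` is the threshold of prox-boundedness of `g`. -/
def BelowThreshold (g : Euc m → EReal) (μ : ℝ) : Prop :=
  0 < μ ∧ ∃ μ' : ℝ, μ < μ' ∧ ProxBoundedWith g μ'

/-- The tangent cone to `Ω` at `wbar`. -/
def tangentCone {E : Type*} [NormedAddCommGroup E] [NormedSpace ℝ E]
    (Ω : Set E) (wbar : E) : Set E :=
  {v | ∃ (t : ℕ → ℝ) (w : ℕ → E), (∀ k, 0 < t k) ∧ Tendsto t atTop (𝓝 0) ∧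
        Tendsto w atTop (𝓝 v) ∧ ∀ k, wbar + t k • w k ∈ Ω}

/-- The regular (Fréchet) subdifferential of `g` at `zbar`. -/
def regSubdiff (g : Euc m → EReal) (zbar : Euc m) : Set (Euc m) :=
  {v | 0 ≤ liminf (fun z : Euc m =>
      (g z - g zbar - ((inner ℝ v (z - zbar) : ℝ) : EReal)) / ((‖z - zbar‖ : ℝ) : EReal))
      (𝓝[≠] zbar)}

/-- The limiting (Mordukhovich) subdifferential of `g` at `zbar`. -/
def limSubdiff (g : Euc m → EReal) (zbar : Euc m) : Set (Euc m) :=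
  {v | ∃ zs vs : ℕ → Euc m, Tendsto zs atTop (𝓝 zbar) ∧
        Tendsto (fun k => g (zs k)) atTop (𝓝 (g zbar)) ∧
        Tendsto vs atTop (𝓝 v) ∧ ∀ k, vs k ∈ regSubdiff g (zs k)}

/-- The subderivative `dg(zbar)(v)`. -/
def subderiv (g : Euc m → EReal) (zbar v : Euc m) : EReal :=
  liminf (fun p : ℝ × Euc m => (g (zbar + p.1 • p.2) - g zbar) / ((p.1 : ℝ) : EReal))
    ((𝓝[>] (0 : ℝ)) ×ˢ 𝓝 v)

/-- The second subderivative `d²g(zbar, ybar)(v)`. -/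
def secondSubderiv (g : Euc m → EReal) (zbar ybar v : Euc m) : EReal :=
  liminf (fun p : ℝ × Euc m =>
      (g (zbar + p.1 • p.2) - g zbar - ((p.1 * (inner ℝ ybar p.2 : ℝ) : ℝ) : EReal)) /
        ((p.1 ^ 2 / 2 : ℝ) : EReal))
    ((𝓝[>] (0 : ℝ)) ×ˢ 𝓝 v)

/-- The Lagrangian `L(·, y) = f + ⟨y, c ·⟩` of (P). -/
def LagFn (f : Euc n → ℝ) (c : Euc n → Euc m) (y : Euc m) : Euc n → ℝ :=
  fun x => f x + (inner ℝ y (c x) : ℝ)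

/-- `∇ₓL(xbar, y) = 0`. -/
def gradLagZero (f : Euc n → ℝ) (c : Euc n → Euc m) (xbar : Euc n) (y : Euc m) : Prop :=
  fderiv ℝ (LagFn f c y) xbar = 0

/-- The set `Λ(xbar)` of Lagrange multipliers of the M-stationarity system at `xbar`. -/
def Lambda (f : Euc n → ℝ) (c : Euc n → Euc m) (g : Euc m → EReal) (xbar : Euc n) :
    Set (Euc m) :=
  {y | gradLagZero f c xbar y ∧ y ∈ limSubdiff g (c xbar)}

/-- `∇²ₓₓL(xbar, y)[u, w]`. -/
def hessLag (f : Euc n → ℝ) (c : Euc n → Euc m) (xbar : Euc n) (y : Euc m) (u w : Euc n) : ℝ :=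
  iteratedFDeriv ℝ 2 (LagFn f c y) xbar ![u, w]

/-- The critical cone `C(xbar)` of (P). -/
def critCone (f : Euc n → ℝ) (c : Euc n → Euc m) (g : Euc m → EReal) (xbar : Euc n) :
    Set (Euc n) :=
  {u | ((fderiv ℝ f xbar u : ℝ) : EReal) + subderiv g (c xbar) (fderiv ℝ c xbar u) ≤ 0}

/-- The directional multiplier set `Λ(xbar, u)`. -/
def dirLambda (f : Euc n → ℝ) (c : Euc n → Euc m) (g : Euc m → EReal) (xbar : Euc n)
    (u : Euc n) : Set (Euc m) :=
  {y | gradLagZero f c xbar y ∧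
    subderiv g (c xbar) (fderiv ℝ c xbar u) = ((inner ℝ y (fderiv ℝ c xbar u) : ℝ) : EReal) ∧
    secondSubderiv g (c xbar) y (fderiv ℝ c xbar u) ≠ ⊥}

/-- The second-order sufficient condition (SOSC) for (P) at `xbar`. -/
def SOSC (f : Euc n → ℝ) (c : Euc n → Euc m) (g : Euc m → EReal) (xbar : Euc n) : Prop :=
  ∀ u ∈ critCone f c g xbar, u ≠ 0 → ∃ y ∈ dirLambda f c g xbar u,
    0 < ((hessLag f c xbar y u u : ℝ) : EReal) + secondSubderiv g (c xbar) y (fderiv ℝ c xbar u)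

/-- The stationarity residual `Θ(x, z, y)`; the distance to the (possibly empty)
subdifferential is taken in `EReal` via an infimum. -/
def Theta (f : Euc n → ℝ) (c : Euc n → Euc m) (g : Euc m → EReal)
    (x : Euc n) (z y : Euc m) : EReal :=
  ((‖fderiv ℝ (LagFn f c y) x‖ + ‖c x - z‖ : ℝ) : EReal) +
    ⨅ v ∈ limSubdiff g z, ((‖y - v‖ : ℝ) : EReal)

/-- The graphical derivative `D(∂g)(zbar, ybar)(v)` of the limiting subdifferential mapping. -/
def gDeriv (g : Euc m → EReal) (zbar ybar v : Euc m) : Set (Euc m) :=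
  {η | (v, η) ∈ tangentCone {p : Euc m × Euc m | p.2 ∈ limSubdiff g p.1} (zbar, ybar)}

/-- The Moreau envelope `g^μ(w)`. -/
def moreau (g : Euc m → EReal) (μ : ℝ) (w : Euc m) : EReal :=
  ⨅ z, (g z + ((‖z - w‖ ^ 2 / (2 * μ) : ℝ) : EReal))

/-- The augmented Lagrangian `L_μ(x, y)` of (P). -/
def ALfun (f : Euc n → ℝ) (c : Euc n → Euc m) (g : Euc m → EReal) (μ : ℝ)
    (x : Euc n) (y : Euc m) : EReal :=
  (f x : EReal) + moreau g μ (c x + μ • y) - ((μ / 2 * ‖y‖ ^ 2 : ℝ) : EReal)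

/-- `xbar` is a strict local minimizer of (P). -/
def StrictLocalMin (f : Euc n → ℝ) (c : Euc n → Euc m) (g : Euc m → EReal)
    (xbar : Euc n) : Prop :=
  c xbar ∈ edom g ∧ ∃ ρ : ℝ, 0 < ρ ∧ ∀ x : Euc n, ‖x - xbar‖ ≤ ρ → c x ∈ edom g → x ≠ xbar →
    (f xbar : EReal) + g (c xbar) < (f x : EReal) + g (c x)

open Classical in
/-- A sequence generated by the safeguarded implicit augmented Lagrangian method
(Algorithm 4.1) for problem (P). -/
structure ALMSeq (n m : ℕ) (f : Euc n → ℝ) (c : Euc n → Euc m) (g : Euc m → EReal) where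
  /-- sufficient-decrease parameter -/
  θ : ℝ
  /-- penalty-reduction parameter -/
  κ : ℝ
  hθ : 0 < θ ∧ θ < 1
  hκ : 0 < κ ∧ κ < 1
  /-- safeguarding set -/
  Y : Set (Euc m)
  hYne : Y.Nonempty
  hYbdd : IsBounded Y
  /-- primal iterates -/
  x : ℕ → Euc n
  /-- auxiliary (certificate) iterates -/
  z : ℕ → Euc m
  /-- safeguarded multiplier estimates -/
  yhat : ℕ → Euc m
  /-- multiplier iterates -/
  y : ℕ → Euc m
  /-- penalty parameters -/
  μ : ℕ → ℝ
  /-- inner tolerances -/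
  ε : ℕ → ℝ
  hyhatY : ∀ k, yhat k ∈ Y
  hεnn : ∀ k, 0 ≤ ε k
  hμthr : ∀ k, BelowThreshold g (μ k)
  /-- `z k ∈ prox_{μ_k g}(c(x^k) + μ_k ŷ^k)` -/
  hprox : ∀ k, ∀ w : Euc m,
    g (z k) + ((‖z k - (c (x k) + μ k • yhat k)‖ ^ 2 / (2 * μ k) : ℝ) : EReal) ≤
      g w + ((‖w - (c (x k) + μ k • yhat k)‖ ^ 2 / (2 * μ k) : ℝ) : EReal)
  /-- dual update rule -/
  hy : ∀ k, y k = yhat k + (μ k)⁻¹ • (c (x k) - z k)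
  /-- approximate stationarity for the subproblem, `‖∇ₓL^S_{μ_k}(x^k,z^k,ŷ^k)‖ ≤ ε_k` -/
  hdual : ∀ k, ‖fderiv ℝ (LagFn f c (y k)) (x k)‖ ≤ ε k
  /-- penalty update rule -/
  hμupd : ∀ k, μ (k + 1) =
    if k = 0 ∨ ‖c (x k) - z k‖ ≤ θ * ‖c (x (k - 1)) - z (k - 1)‖ then μ k else κ * μ k

/-- the marginal value of the scaled proximal subproblem converges to
half the squared distance to the domain. -/
theorem statement0 {m : ℕ} (h : Euc m → EReal)
    (hproper : ProperFn h) (hlsc : LowerSemicontinuous h) (hpb : ProxBounded h)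
    (hdom : IsClosed (edom h)) (zbar : Euc m) :
    Tendsto
      (fun p : Euc m × ℝ =>
        ⨅ z ∈ edom h, ((p.2 : EReal) * h z + ((‖z - p.1‖ ^ 2 / 2 : ℝ) : EReal)))
      ((𝓝 zbar) ×ˢ (𝓝[>] (0 : ℝ)))
      (𝓝 (((Metric.infDist zbar (edom h)) ^ 2 / 2 : ℝ) : EReal)) := by
  classical
  obtain ⟨hbot, z₀, hz₀⟩ := hproper
  obtain ⟨μ₀, hμ₀, b, hb⟩ := hpb
  have hne : (edom h).Nonempty := ⟨z₀, hz₀⟩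
  obtain ⟨zhat, hzhat, hdist⟩ := hdom.exists_infDist_eq_dist hne zbar
  set d : ℝ := Metric.infDist zbar (edom h) with hd
  have hzhat_ne_top : h zhat ≠ ⊤ := ne_of_lt hzhat
  set r : ℝ := (h zhat).toReal with hr
  have hzr : h zhat = (r : EReal) := (EReal.coe_toReal hzhat_ne_top (hbot zhat)).symm
  set L : Filter (Euc m × ℝ) := (𝓝 zbar) ×ˢ (𝓝[>] (0 : ℝ)) with hLdef
  have hLle : L ≤ 𝓝 (zbar, (0 : ℝ)) := by
    rw [nhds_prod_eq]
    exact Filter.prod_mono le_rfl nhdsWithin_le_nhds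
  -- lower real function
  set fl : Euc m × ℝ → ℝ := fun p =>
    p.2 * b - p.2 / μ₀ * ‖p.1‖ ^ 2
      + (1 / 2 - p.2 / μ₀) * (Metric.infDist p.1 (edom h)) ^ 2 with hfl
  set fu : Euc m × ℝ → ℝ := fun p => p.2 * r + ‖zhat - p.1‖ ^ 2 / 2 with hfu
  have hcontl : Continuous fl := by
    apply Continuous.add
    · exact (continuous_snd.mul continuous_const).sub
        ((continuous_snd.div_const μ₀).mul ((continuous_fst.norm).pow 2))
    · exact (continuous_const.sub (continuous_snd.div_const μ₀)).mul
        (((Metric.continuous_infDist_pt (edom h)).comp continuous_fst).pow 2)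
  have hcontu : Continuous fu := by
    apply Continuous.add
    · exact continuous_snd.mul continuous_const
    · exact ((continuous_const.sub continuous_fst).norm.pow 2).div_const 2
  have hdzhat : ‖zhat - zbar‖ = d := by
    rw [hdist, dist_eq_norm, norm_sub_rev]
  have hLl : Tendsto fl L (𝓝 (d ^ 2 / 2)) := by
    have := (hcontl.tendsto (zbar, 0)).mono_left hLle
    have hv : fl (zbar, 0) = d ^ 2 / 2 := by
      simp [hfl]
      ring
    rwa [hv] at this
  have hLu : Tendsto fu L (𝓝 (d ^ 2 / 2)) := by
    have := (hcontu.tendsto (zbar, 0)).mono_left hLle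
    have hv : fu (zbar, 0) = d ^ 2 / 2 := by
      simp [hfu, hdzhat]
    rwa [hv] at this
  refine tendsto_of_tendsto_of_tendsto_of_le_of_le'
    (EReal.tendsto_coe.mpr hLl) (EReal.tendsto_coe.mpr hLu) ?_ ?_
  · -- lower bound, eventually
    have hev : ∀ᶠ p : Euc m × ℝ in L, 0 < p.2 ∧ p.2 < μ₀ / 2 := by
      have h1 : ∀ᶠ μ in 𝓝[>] (0 : ℝ), 0 < μ ∧ μ < μ₀ / 2 := by
        have h2 : ∀ᶠ μ in 𝓝[>] (0 : ℝ), μ < μ₀ / 2 :=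
          nhdsWithin_le_nhds (eventually_lt_nhds (half_pos hμ₀))
        filter_upwards [h2, self_mem_nhdsWithin] with μ hμ2 hμ1
        exact ⟨hμ1, hμ2⟩
      exact h1.prod_inr (𝓝 zbar)
    filter_upwards [hev] with p hp
    obtain ⟨hμpos, hμlt⟩ := hp
    refine le_iInf₂ fun z hz => ?_
    have hzt : h z = ((h z).toReal : EReal) := (EReal.coe_toReal (ne_of_lt hz) (hbot z)).symm
    set t : ℝ := (h z).toReal with ht
    have hbz : b ≤ t + ‖z‖ ^ 2 / (2 * μ₀) := by
      have := hb z
      rw [hzt] at this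
      exact_mod_cast this
    have hD : Metric.infDist p.1 (edom h) ≤ ‖z - p.1‖ := by
      rw [← dist_eq_norm, dist_comm]
      exact Metric.infDist_le_dist_of_mem hz
    have hDnn : 0 ≤ Metric.infDist p.1 (edom h) := Metric.infDist_nonneg
    have htri : ‖z‖ ≤ ‖z - p.1‖ + ‖p.1‖ := by
      simpa using norm_add_le (z - p.1) p.1
    have key : fl p ≤ p.2 * t + ‖z - p.1‖ ^ 2 / 2 := by
      have h1 : p.2 * b ≤ p.2 * t + p.2 / μ₀ * (‖z‖ ^ 2 / 2) := by
        have h1' := mul_le_mul_of_nonneg_left hbz hμpos.le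
        have h1'' : p.2 * (t + ‖z‖ ^ 2 / (2 * μ₀)) = p.2 * t + p.2 / μ₀ * (‖z‖ ^ 2 / 2) := by
          field_simp
        linarith [h1'.trans_eq h1'']
      have h2 : ‖z‖ ^ 2 ≤ 2 * ‖z - p.1‖ ^ 2 + 2 * ‖p.1‖ ^ 2 := by
        nlinarith [htri, norm_nonneg (z - p.1), norm_nonneg p.1, norm_nonneg z,
          sq_nonneg (‖z - p.1‖ - ‖p.1‖)]
      have h3 : (1 / 2 - p.2 / μ₀) * (Metric.infDist p.1 (edom h)) ^ 2
          ≤ (1 / 2 - p.2 / μ₀) * ‖z - p.1‖ ^ 2 := by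
        have hc : 0 ≤ 1 / 2 - p.2 / μ₀ := by
          have : p.2 / μ₀ ≤ 1 / 2 := by
            rw [div_le_iff₀ hμ₀]
            linarith
          linarith
        exact mul_le_mul_of_nonneg_left (pow_le_pow_left₀ hDnn hD 2) hc
      have h4 : p.2 / μ₀ * (‖z‖ ^ 2 / 2)
          ≤ p.2 / μ₀ * (‖z - p.1‖ ^ 2 + ‖p.1‖ ^ 2) := by
        have hc : 0 ≤ p.2 / μ₀ := div_nonneg hμpos.le hμ₀.le
        have := mul_le_mul_of_nonneg_left (by linarith [h2] : ‖z‖ ^ 2 / 2 ≤ ‖z - p.1‖ ^ 2 + ‖p.1‖ ^ 2) hc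
        exact this
      simp only [hfl]
      have hexp : p.2 / μ₀ * (‖z - p.1‖ ^ 2 + ‖p.1‖ ^ 2)
          = p.2 / μ₀ * ‖z - p.1‖ ^ 2 + p.2 / μ₀ * ‖p.1‖ ^ 2 := by ring
      nlinarith [h1, h3, h4]
    calc ((fl p : ℝ) : EReal) ≤ ((p.2 * t + ‖z - p.1‖ ^ 2 / 2 : ℝ) : EReal) := by
          exact_mod_cast key
      _ = (p.2 : EReal) * h z + ((‖z - p.1‖ ^ 2 / 2 : ℝ) : EReal) := by
          rw [hzt]
          norm_cast
  · -- upper bound, everywhere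
    refine Filter.Eventually.of_forall fun p => ?_
    have hle : (⨅ z ∈ edom h, ((p.2 : EReal) * h z + ((‖z - p.1‖ ^ 2 / 2 : ℝ) : EReal)))
        ≤ (p.2 : EReal) * h zhat + ((‖zhat - p.1‖ ^ 2 / 2 : ℝ) : EReal) := iInf₂_le zhat hzhat
    refine hle.trans ?_
    rw [hzr]
    norm_cast


end Paper
end
end

section
/- Let h : ℝ^m → ℝ ∪ {∞} be proper, lower semicontinuous, and prox-bounded. Let {μ_k} ⊂ (0, ∞) with μ_k ↓ 0, let {z^k} ⊆ dom h, and let {z̃^k} ⊂ ℝ^m be bounded, and assume limsup_{k→∞} ( μ_k·h(z^k) + ½‖z^k − z̃^k‖² ) ≤ 0. Then μ_k·h(z^k) → 0 and ‖z^k − z̃^k‖ → 0 as k → ∞. -/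
open Filter Topology Bornology

noncomputable section

namespace Paper

variable {n m : ℕ}

theorem statement1 {m : ℕ} (h : Euc m → EReal)
    (hproper : ProperFn h) (hlsc : LowerSemicontinuous h) (hpb : ProxBounded h)
    (μ : ℕ → ℝ) (hμpos : ∀ k, 0 < μ k) (hμanti : Antitone μ)
    (hμ0 : Tendsto μ atTop (𝓝 0))
    (z : ℕ → Euc m) (hz : ∀ k, z k ∈ edom h)
    (zt : ℕ → Euc m) (hzt : IsBounded (Set.range zt))
    (hls : limsup (fun k => (μ k : EReal) * h (z k) + ((‖z k - zt k‖ ^ 2 / 2 : ℝ) : EReal))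
        atTop ≤ 0) :
    Tendsto (fun k => (μ k : EReal) * h (z k)) atTop (𝓝 0) ∧
      Tendsto (fun k => ‖z k - zt k‖) atTop (𝓝 0) := by
  -- Real value of h (z k)
  obtain ⟨r, hrk⟩ : ∃ r : ℕ → ℝ, ∀ k, h (z k) = ((r k : ℝ) : EReal) := by
    refine ⟨fun k => (h (z k)).toReal, fun k => ?_⟩
    have htop : h (z k) ≠ ⊤ := by
      have : h (z k) < ⊤ := hz k
      exact this.ne
    exact (EReal.coe_toReal htop (hproper.1 (z k))).symm
  -- prox-boundedness constants
  obtain ⟨μb, hμbpos, bb, hbb⟩ := hpb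
  have hbr : ∀ k, bb ≤ r k + ‖z k‖ ^ 2 / (2 * μb) := by
    intro k
    have := hbb (z k)
    rw [hrk k, ← EReal.coe_add] at this
    exact_mod_cast this
  -- bound on zt
  obtain ⟨C, hC⟩ := isBounded_iff_forall_norm_le.mp hzt
  obtain ⟨M, hMdef⟩ : ∃ M : ℝ, M = max C 0 := ⟨_, rfl⟩
  have hM : ∀ k, ‖zt k‖ ≤ M := fun k =>
    le_trans (hC (zt k) (Set.mem_range_self k)) (hMdef ▸ le_max_left _ _)
  have hM0 : (0 : ℝ) ≤ M := hMdef ▸ le_max_right _ _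
  -- eventual upper bound from the limsup hypothesis
  have ht : ∀ ε : ℝ, 0 < ε → ∀ᶠ k in atTop,
      μ k * r k + ‖z k - zt k‖ ^ 2 / 2 < ε := by
    intro ε hε
    have h1 : limsup (fun k => (μ k : EReal) * h (z k) +
        ((‖z k - zt k‖ ^ 2 / 2 : ℝ) : EReal)) atTop < (ε : EReal) :=
      lt_of_le_of_lt hls (by exact_mod_cast hε)
    filter_upwards [eventually_lt_of_limsup_lt h1] with k hk
    rw [hrk k, ← EReal.coe_mul, ← EReal.coe_add] at hk
    exact_mod_cast hk
  have hμsmall : ∀ᶠ k in atTop, μ k < μb / 4 :=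
    hμ0.eventually (gt_mem_nhds (by positivity))
  obtain ⟨K2, hK2def⟩ : ∃ K2 : ℝ, K2 = 4 + 4 * μ 0 * |bb| + M ^ 2 := ⟨_, rfl⟩
  -- eventual bound on ‖z k - zt k‖ ^ 2
  have hbound : ∀ᶠ k in atTop, ‖z k - zt k‖ ^ 2 ≤ K2 := by
    filter_upwards [ht 1 one_pos, hμsmall] with k h1 h2
    have hμk0 : 0 < μ k := hμpos k
    have hμk1 : μ k ≤ μ 0 := hμanti (Nat.zero_le k)
    have hzk : ‖z k‖ ≤ ‖z k - zt k‖ + M := by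
      calc ‖z k‖ = ‖z k - zt k + zt k‖ := by rw [sub_add_cancel]
        _ ≤ ‖z k - zt k‖ + ‖zt k‖ := norm_add_le _ _
        _ ≤ ‖z k - zt k‖ + M := by linarith [hM k]
    have e2 : ‖z k‖ ^ 2 ≤ 2 * ‖z k - zt k‖ ^ 2 + 2 * M ^ 2 := by
      nlinarith [norm_nonneg (z k), norm_nonneg (z k - zt k), sq_nonneg (‖z k - zt k‖ - M)]
    have hrlb : bb - ‖z k‖ ^ 2 / (2 * μb) ≤ r k := by linarith [hbr k]
    have e1 : μ k * bb - μ k * (‖z k‖ ^ 2 / (2 * μb)) ≤ μ k * r k := by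
      have := mul_le_mul_of_nonneg_left hrlb hμk0.le
      rw [mul_sub] at this
      exact this
    have hq : μb * (‖z k‖ ^ 2 / (2 * μb)) = ‖z k‖ ^ 2 / 2 := by
      field_simp
    have hqnn : 0 ≤ ‖z k‖ ^ 2 / (2 * μb) := by positivity
    have e3 : μ k * (‖z k‖ ^ 2 / (2 * μb)) ≤ (2 * ‖z k - zt k‖ ^ 2 + 2 * M ^ 2) / 8 := by
      have h5 : μ k * (‖z k‖ ^ 2 / (2 * μb)) ≤ (μb / 4) * (‖z k‖ ^ 2 / (2 * μb)) :=
        mul_le_mul_of_nonneg_right h2.le hqnn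
      have h6 : (μb / 4) * (‖z k‖ ^ 2 / (2 * μb)) = ‖z k‖ ^ 2 / 8 := by
        field_simp
        ring
      rw [h6] at h5
      linarith
    have e4 : -(μ 0 * |bb|) ≤ μ k * bb := by
      nlinarith [neg_abs_le bb, le_abs_self bb, abs_nonneg bb]
    rw [hK2def]
    nlinarith [e1, e3, e4]
  obtain ⟨Cc, hCcdef⟩ : ∃ Cc : ℝ, Cc = |bb| + (2 * K2 + 2 * M ^ 2) / (2 * μb) := ⟨_, rfl⟩
  -- eventual lower bound on μ k * r k
  have hlow : ∀ᶠ k in atTop, -(μ k * Cc) ≤ μ k * r k := by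
    filter_upwards [hbound] with k hk
    have hμk0 : 0 < μ k := hμpos k
    have hzk : ‖z k‖ ≤ ‖z k - zt k‖ + M := by
      calc ‖z k‖ = ‖z k - zt k + zt k‖ := by rw [sub_add_cancel]
        _ ≤ ‖z k - zt k‖ + ‖zt k‖ := norm_add_le _ _
        _ ≤ ‖z k - zt k‖ + M := by linarith [hM k]
    have e2 : ‖z k‖ ^ 2 ≤ 2 * K2 + 2 * M ^ 2 := by
      nlinarith [norm_nonneg (z k), norm_nonneg (z k - zt k), sq_nonneg (‖z k - zt k‖ - M)]
    have hdiv : ‖z k‖ ^ 2 / (2 * μb) ≤ (2 * K2 + 2 * M ^ 2) / (2 * μb) :=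
      div_le_div_of_nonneg_right e2 (by positivity)
    have hrlb : -Cc ≤ r k := by
      have := hbr k
      rw [hCcdef]
      nlinarith [neg_abs_le bb, hdiv]
    have := mul_le_mul_of_nonneg_left hrlb hμk0.le
    rw [mul_neg] at this
    exact this
  have hμC : Tendsto (fun k => μ k * Cc) atTop (𝓝 0) := by
    simpa using hμ0.mul_const Cc
  -- μ k * r k → 0
  have ha : Tendsto (fun k => μ k * r k) atTop (𝓝 0) := by
    rw [Metric.tendsto_nhds]
    intro ε hε
    have h3 : ∀ᶠ k in atTop, μ k * Cc < ε / 2 :=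
      hμC.eventually (gt_mem_nhds (by positivity))
    filter_upwards [ht (ε / 2) (by positivity), hlow, h3] with k h1 h2 h3
    rw [Real.dist_eq, sub_zero, abs_lt]
    have hs : 0 ≤ ‖z k - zt k‖ ^ 2 / 2 := by positivity
    constructor <;> linarith
  have hsz : Tendsto (fun k => ‖z k - zt k‖) atTop (𝓝 0) := by
    rw [Metric.tendsto_nhds]
    intro ε hε
    have h3 : ∀ᶠ k in atTop, μ k * Cc < ε ^ 2 / 4 :=
      hμC.eventually (gt_mem_nhds (by positivity))
    filter_upwards [ht (ε ^ 2 / 4) (by positivity), hlow, h3] with k h1 h2 h3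
    rw [Real.dist_eq, sub_zero, abs_of_nonneg (norm_nonneg _)]
    nlinarith [norm_nonneg (z k - zt k)]
  refine ⟨?_, hsz⟩
  have heq : (fun k => (μ k : EReal) * h (z k)) = fun k => (((μ k * r k : ℝ)) : EReal) := by
    funext k
    rw [hrk k, ← EReal.coe_mul]
  rw [heq]
  have := EReal.tendsto_coe.mpr ha
  simpa using this


end Paper
end
end

section
/- Let h : ℝ^m → ℝ ∪ {∞} be proper, lower semicontinuous, and positively homogeneous of degree 2, i.e., h(αy) = α²·h(y) for all y ∈ ℝ^m and all real α > 0. Then for every z̄ ∈ dom h and every v in the limiting subdifferential ∂h(z̄), one has h(z̄) = ½⟨v, z̄⟩. -/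
open Filter Topology Bornology

noncomputable section

namespace Paper

variable {n m : ℕ}

lemma key_statement2 {m : ℕ} (h : Euc m → EReal) (hbot : ∀ z, h z ≠ ⊥)
    (hhom : ∀ (y : Euc m) (α : ℝ), 0 < α → h (α • y) = ((α ^ 2 : ℝ) : EReal) * h y)
    (z : Euc m) (hz : h z < ⊤) (v : Euc m) (hv : v ∈ regSubdiff h z) :
    h z = ((1 / 2 * (inner ℝ v z : ℝ) : ℝ) : EReal) := by
  set r : ℝ := (h z).toReal with hrdef
  have hzr : h z = (r : EReal) := (EReal.coe_toReal hz.ne (hbot z)).symm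
  by_cases hz0 : z = 0
  · subst hz0
    have h4 : h (0 : Euc m) = ((4 : ℝ) : EReal) * h 0 := by
      have := hhom 0 2 (by norm_num)
      rw [smul_zero] at this
      convert this using 2
      norm_num
    rw [hzr, ← EReal.coe_mul] at h4
    have hr4 : r = 4 * r := EReal.coe_eq_coe_iff.mp h4
    have hr0 : r = 0 := by linarith
    rw [hzr, hr0]
    simp
  · have hN : (0 : ℝ) < ‖z‖ := norm_pos_iff.mpr hz0
    set N : ℝ := ‖z‖ with hNdef
    set c : ℝ := inner ℝ v z with hcdef
    set F : Euc m → EReal := fun z' =>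
      (h z' - h z - ((inner ℝ v (z' - z) : ℝ) : EReal)) / ((‖z' - z‖ : ℝ) : EReal) with hFdef
    have hv0 : (0 : EReal) ≤ liminf F (𝓝[≠] z) := hv
    set φ : ℝ → Euc m := fun t => (1 + t) • z with hφdef
    have hsub : ∀ t : ℝ, φ t - z = t • z := by
      intro t
      show (1 + t) • z - z = t • z
      rw [add_smul, one_smul, add_sub_cancel_left]
    -- computation of F ∘ φ
    have hFφ : ∀ t : ℝ, -1 < t → t ≠ 0 →
        F (φ t) = ((((1 + t) ^ 2 * r - r - t * c) / (|t| * N) : ℝ) : EReal) := by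
      intro t ht1 ht0
      have hα : (0 : ℝ) < 1 + t := by linarith
      have e1 : h (φ t) = (((1 + t) ^ 2 * r : ℝ) : EReal) := by
        show h ((1 + t) • z) = _
        rw [hhom z (1 + t) hα, hzr, ← EReal.coe_mul]
      have e3 : (inner ℝ v (φ t - z) : ℝ) = t * c := by
        rw [hsub, real_inner_smul_right]
      have e4 : ‖φ t - z‖ = |t| * N := by
        rw [hsub, norm_smul, Real.norm_eq_abs]
      show (h (φ t) - h z - ((inner ℝ v (φ t - z) : ℝ) : EReal)) / ((‖φ t - z‖ : ℝ) : EReal) = _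
      rw [e1, e3, e4, hzr, ← EReal.coe_sub, ← EReal.coe_sub, ← EReal.coe_div]
    -- φ tends to 𝓝[≠] z along sub-filters of punctured nbhds of 0
    have hφt : ∀ l : Filter ℝ, l ≤ 𝓝[≠] (0:ℝ) → Tendsto φ l (𝓝[≠] z) := by
      intro l hl
      rw [tendsto_nhdsWithin_iff]
      refine ⟨?_, ?_⟩
      · have hc : Continuous φ := (continuous_const.add continuous_id).smul continuous_const
        have h0 : Tendsto φ (𝓝 (0:ℝ)) (𝓝 z) := by
          have := hc.tendsto 0
          simpa [hφdef] using this
        exact h0.mono_left (hl.trans nhdsWithin_le_nhds)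
      · have hself : ∀ᶠ t in l, t ∈ ({(0:ℝ)}ᶜ : Set ℝ) :=
          Eventually.filter_mono hl self_mem_nhdsWithin
        filter_upwards [hself] with t ht
        simp only [Set.mem_compl_iff, Set.mem_singleton_iff] at ht ⊢
        intro heq
        apply ht
        have h' : φ t - z = t • z := hsub t
        rw [heq, sub_self] at h'
        rcases smul_eq_zero.mp h'.symm with h'' | h''
        · exact h''
        · exact absurd h'' hz0
    -- generic bound along sub-filters
    have hbound : ∀ (l : Filter ℝ) [NeBot l], l ≤ 𝓝[≠] (0:ℝ) →
        ∀ G : ℝ → ℝ, (∀ᶠ t in l, F (φ t) = ((G t : ℝ) : EReal)) →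
        ∀ L : ℝ, Tendsto G l (𝓝 L) → 0 ≤ L := by
      intro l _ hl G hG L hGL
      have h1 : liminf F (𝓝[≠] z) ≤ liminf F (map φ l) :=
        liminf_le_liminf_of_le (hφt l hl)
      have h2 : liminf F (map φ l) = liminf (F ∘ φ) l := by
        rw [Filter.liminf, Filter.liminf, Filter.map_map]
      have h3 : liminf (F ∘ φ) l = liminf (fun t => ((G t : ℝ) : EReal)) l :=
        liminf_congr hG
      have h4 : liminf (fun t => ((G t : ℝ) : EReal)) l = ((L : ℝ) : EReal) :=
        Tendsto.liminf_eq ((continuous_coe_real_ereal.tendsto L).comp hGL)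
      have : (0 : EReal) ≤ ((L : ℝ) : EReal) := by
        rw [← h4, ← h3, ← h2]; exact le_trans hv0 h1
      exact EReal.coe_nonneg.mp this
    -- positive side
    have hpos : c ≤ 2 * r := by
      have hl : 𝓝[>] (0:ℝ) ≤ 𝓝[≠] (0:ℝ) :=
        nhdsWithin_mono 0 (fun t ht => ne_of_gt ht)
      have hG : ∀ᶠ t in 𝓝[>] (0:ℝ),
          F (φ t) = (((((2 + t) * r - c) / N : ℝ)) : EReal) := by
        filter_upwards [self_mem_nhdsWithin] with t ht
        have ht0 : (0:ℝ) < t := ht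
        rw [hFφ t (by linarith) (ne_of_gt ht0)]
        congr 1
        rw [abs_of_pos ht0]
        field_simp
        ring
      have hGL : Tendsto (fun t : ℝ => ((2 + t) * r - c) / N) (𝓝[>] (0:ℝ))
          (𝓝 ((2 * r - c) / N)) := by
        have : Tendsto (fun t : ℝ => ((2 + t) * r - c) / N) (𝓝 (0:ℝ))
            (𝓝 (((2 + 0) * r - c) / N)) := by
          apply Tendsto.div_const
          exact (tendsto_const_nhds.add tendsto_id).mul_const r |>.sub tendsto_const_nhds
        simpa using this.mono_left nhdsWithin_le_nhds
      have := hbound (𝓝[>] (0:ℝ)) hl _ hG _ hGL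
      have h2rc : 0 ≤ 2 * r - c := by
        have := (le_div_iff₀ hN).mp this
        linarith
      linarith
    -- negative side
    have hneg : 2 * r ≤ c := by
      have hl : 𝓝[<] (0:ℝ) ≤ 𝓝[≠] (0:ℝ) :=
        nhdsWithin_mono 0 (fun t ht => ne_of_lt ht)
      have hev1 : ∀ᶠ t in 𝓝[<] (0:ℝ), -1 < t :=
        Eventually.filter_mono nhdsWithin_le_nhds (eventually_gt_nhds (by norm_num))
      have hG : ∀ᶠ t in 𝓝[<] (0:ℝ),
          F (φ t) = ((((c - (2 + t) * r) / N : ℝ)) : EReal) := by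
        filter_upwards [self_mem_nhdsWithin, hev1] with t ht ht1
        have ht0 : t < 0 := ht
        rw [hFφ t ht1 (ne_of_lt ht0)]
        congr 1
        rw [abs_of_neg ht0]
        have htne : t ≠ 0 := ne_of_lt ht0
        field_simp
        ring
      have hGL : Tendsto (fun t : ℝ => (c - (2 + t) * r) / N) (𝓝[<] (0:ℝ))
          (𝓝 ((c - 2 * r) / N)) := by
        have : Tendsto (fun t : ℝ => (c - (2 + t) * r) / N) (𝓝 (0:ℝ))
            (𝓝 ((c - (2 + 0) * r) / N)) := by
          apply Tendsto.div_const
          exact tendsto_const_nhds.sub ((tendsto_const_nhds.add tendsto_id).mul_const r)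
        simpa using this.mono_left nhdsWithin_le_nhds
      have := hbound (𝓝[<] (0:ℝ)) hl _ hG _ hGL
      have h2rc : 0 ≤ c - 2 * r := by
        have := (le_div_iff₀ hN).mp this
        linarith
      linarith
    rw [hzr]
    norm_cast
    linarith

theorem statement2 {m : ℕ} (h : Euc m → EReal)
    (hproper : ProperFn h) (hlsc : LowerSemicontinuous h)
    (hhom : ∀ (y : Euc m) (α : ℝ), 0 < α → h (α • y) = ((α ^ 2 : ℝ) : EReal) * h y)
    (zbar : Euc m) (hzbar : zbar ∈ edom h) (v : Euc m) (hv : v ∈ limSubdiff h zbar) :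
    h zbar = ((1 / 2 * (inner ℝ v zbar : ℝ) : ℝ) : EReal) := by
  obtain ⟨zs, vs, hzs, hhz, hvs, hreg⟩ := hv
  have hbot := hproper.1
  have htop : h zbar < ⊤ := hzbar
  have hevtop : ∀ᶠ k in atTop, h (zs k) < ⊤ :=
    hhz.eventually (Filter.Tendsto.eventually_lt_const htop tendsto_id)
  have heq : ∀ᶠ k in atTop,
      h (zs k) = ((1 / 2 * (inner ℝ (vs k) (zs k) : ℝ) : ℝ) : EReal) := by
    filter_upwards [hevtop] with k hk
    exact key_statement2 h hbot hhom (zs k) hk (vs k) (hreg k)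
  have hinner : Tendsto (fun k => (1 / 2 * (inner ℝ (vs k) (zs k) : ℝ) : ℝ)) atTop
      (𝓝 (1 / 2 * (inner ℝ v zbar : ℝ))) :=
    tendsto_const_nhds.mul (hvs.inner hzs)
  have hlim2 : Tendsto (fun k => ((1 / 2 * (inner ℝ (vs k) (zs k) : ℝ) : ℝ) : EReal)) atTop
      (𝓝 (((1 / 2 * (inner ℝ v zbar : ℝ) : ℝ)) : EReal)) :=
    (continuous_coe_real_ereal.tendsto _).comp hinner
  have htends : Tendsto (fun k => h (zs k)) atTop
      (𝓝 (((1 / 2 * (inner ℝ v zbar : ℝ) : ℝ)) : EReal)) :=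
    hlim2.congr' (heq.mono fun k hk => hk.symm)
  exact tendsto_nhds_unique hhz htends


end Paper
end
end

section
/- Let x̄ ∈ ℝ^n be a feasible point of problem (P) at which the second-order sufficient condition (SOSC) holds: for every u ∈ C(x̄) \ {0} there exists y ∈ Λ(x̄, u) with ∇²_{xx}L(x̄, y)[u, u] + d²g(c(x̄), y)(c'(x̄)u) > 0. Then there exist constants ε > 0 and β > 0 such that φ(x) − φ(x̄) ≥ (β/2)‖x − x̄‖² for all x with ‖x − x̄‖ ≤ ε; in particular, x̄ is a strict local minimizer of (P). -/
open Filter Topology Bornology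

noncomputable section

namespace Paper

variable {n m : ℕ}

/-- First-order difference quotient along a sequence. -/
lemma tendsto_diffquot {N : ℕ} {E : Type*} [NormedAddCommGroup E] [NormedSpace ℝ E]
    {h : Euc N → E} (hh : Differentiable ℝ h)
    (xbar : Euc N) {t : ℕ → ℝ} {u : ℕ → Euc N} {uu : Euc N}
    (ht : ∀ k, 0 < t k) (hn : ∀ k, ‖u k‖ = 1)
    (ht0 : Tendsto t atTop (𝓝 0)) (hu : Tendsto u atTop (𝓝 uu)) :
    Tendsto (fun k => (t k)⁻¹ • (h (xbar + t k • u k) - h xbar)) atTop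
      (𝓝 (fderiv ℝ h xbar uu)) := by
  have hx : Tendsto (fun k => xbar + t k • u k) atTop (𝓝 xbar) := by
    have : Tendsto (fun k => t k • u k) atTop (𝓝 ((0:ℝ) • uu)) := ht0.smul hu
    simpa using tendsto_const_nhds.add this
  have hder := (hh xbar).hasFDerivAt
  have hlo := hder.isLittleO.comp_tendsto hx
  simp only [Function.comp_def, add_sub_cancel_left] at hlo
  have hlo2 : (fun k => h (xbar + t k • u k) - h xbar - (fderiv ℝ h xbar) (t k • u k))
      =o[atTop] fun k => t k := by
    refine hlo.trans_isBigO (Asymptotics.isBigO_of_le _ fun k => ?_)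
    have : ‖t k • u k‖ = t k := by
      rw [norm_smul, hn k, Real.norm_eq_abs, abs_of_pos (ht k), mul_one]
    simp [this, Real.norm_eq_abs, le_abs_self]
  have h0 := hlo2.tendsto_inv_smul_nhds_zero
  have heq : ∀ k, (t k)⁻¹ • (h (xbar + t k • u k) - h xbar)
      = (t k)⁻¹ • (h (xbar + t k • u k) - h xbar - (fderiv ℝ h xbar) (t k • u k))
        + (fderiv ℝ h xbar) (u k) := by
    intro k
    have : (fderiv ℝ h xbar) (t k • u k) = t k • (fderiv ℝ h xbar) (u k) := by
      simp
    rw [this, smul_sub ((t k)⁻¹) (h (xbar + t k • u k) - h xbar)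
      (t k • (fderiv ℝ h xbar) (u k)), inv_smul_smul₀ (ht k).ne']
    abel
  have hlin : Tendsto (fun k => (fderiv ℝ h xbar) (u k)) atTop (𝓝 ((fderiv ℝ h xbar) uu)) :=
    ((fderiv ℝ h xbar).continuous.tendsto _).comp hu
  have := h0.add hlin
  simp only [zero_add] at this
  refine this.congr fun k => (heq k).symm


lemma taylor2_est {N : ℕ} {h : Euc N → ℝ} (hh : ContDiff ℝ 2 h)
    (xbar : Euc N) (h0 : fderiv ℝ h xbar = 0) {δ : ℝ} (hδ : 0 < δ) :
    ∃ r > 0, ∀ t : ℝ, 0 < t → t ≤ r → ∀ v : Euc N, ‖v‖ = 1 →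
      |h (xbar + t • v) - h xbar - t ^ 2 / 2 * (fderiv ℝ (fderiv ℝ h) xbar v v)| ≤ δ * t ^ 2 := by
  set D := fderiv ℝ h with hD
  set B := fderiv ℝ D xbar with hB
  have hdh : Differentiable ℝ h := hh.differentiable (by norm_num)
  have hD1 : ContDiff ℝ 1 D := hh.fderiv_right (m := 1) (by norm_num)
  have hdD : Differentiable ℝ D := hD1.differentiable one_ne_zero
  have hcont : Continuous (fderiv ℝ D) := hD1.continuous_fderiv one_ne_zero
  -- choose r from continuity at xbar
  have hct : Tendsto (fderiv ℝ D) (𝓝 xbar) (𝓝 B) := hcont.tendsto xbar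
  have hev : ∀ᶠ z in 𝓝 xbar, ‖fderiv ℝ D z - B‖ < δ := by
    have := hct (Metric.ball_mem_nhds B hδ)
    filter_upwards [this] with z hz
    exact (dist_eq_norm (fderiv ℝ D z) B).symm.trans_lt hz
  obtain ⟨r, hr, hball⟩ := Metric.eventually_nhds_iff_ball.mp hev
  refine ⟨r / 2, by positivity, fun t ht htr v hv => ?_⟩
  set q : ℝ := B v v with hq
  -- the two auxiliary functions
  set γ : ℝ → Euc N := fun s => xbar + s • v with hγ
  have hγd : ∀ s : ℝ, HasDerivAt γ v s := by
    intro s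
    have h1 : HasDerivAt (fun s : ℝ => s • v) ((1:ℝ) • v) s :=
      (hasDerivAt_id s).smul_const v
    simpa [hγ] using h1.const_add xbar
  have hmem : ∀ s : ℝ, s ∈ Set.Icc (0:ℝ) t → ‖fderiv ℝ D (γ s) - B‖ < δ := by
    intro s hs
    apply hball
    have : ‖γ s - xbar‖ = |s| := by simp [hγ, norm_smul, hv]
    simp only [Metric.mem_ball, dist_eq_norm, this]
    rw [abs_of_nonneg hs.1]
    calc s ≤ t := hs.2
    _ ≤ r / 2 := htr
    _ < r := by linarith
  -- ψ s = D (γ s) v - s * q, with ψ 0 = 0 and ‖ψ'‖ ≤ δ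
  set ψ : ℝ → ℝ := fun s => D (γ s) v - s * q with hψ
  have hψd : ∀ s : ℝ, HasDerivAt ψ ((fderiv ℝ D (γ s)) v v - q) s := by
    intro s
    have h1 : HasDerivAt (fun s => D (γ s)) (fderiv ℝ D (γ s) v) s :=
      ((hdD (γ s)).hasFDerivAt).comp_hasDerivAt s (hγd s)
    have h2 : HasDerivAt (fun s => D (γ s) v) ((fderiv ℝ D (γ s)) v v) s := by
      have := h1.clm_apply (hasDerivAt_const s v)
      simpa using this
    have := h2.sub ((hasDerivAt_id s).mul_const q)
    simp only [one_mul] at this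
    exact this
  have hψ0 : ψ 0 = 0 := by
    have : γ 0 = xbar := by simp [hγ]
    simp [hψ, this, h0]
  have hψbound : ∀ s ∈ Set.Icc (0:ℝ) t, ‖ψ s‖ ≤ δ * t := by
    intro s hs
    have key : ∀ σ ∈ Set.Icc (0:ℝ) t, ‖(fderiv ℝ D (γ σ)) v v - q‖ ≤ δ := by
      intro σ hσ
      have : (fderiv ℝ D (γ σ)) v v - q = ((fderiv ℝ D (γ σ) - B) v) v := by
        simp [hq]
      rw [this]
      calc ‖((fderiv ℝ D (γ σ) - B) v) v‖ ≤ ‖(fderiv ℝ D (γ σ) - B) v‖ * ‖v‖ :=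
            ContinuousLinearMap.le_opNorm _ _
        _ ≤ ‖fderiv ℝ D (γ σ) - B‖ * ‖v‖ * ‖v‖ := by
            gcongr; exact ContinuousLinearMap.le_opNorm _ _
        _ ≤ δ := by rw [hv]; simpa using (hmem σ hσ).le
    have := (convex_Icc (0:ℝ) t).norm_image_sub_le_of_norm_hasDerivWithin_le
      (fun σ hσ => (hψd σ).hasDerivWithinAt) key (Set.left_mem_Icc.mpr ht.le) hs
    calc ‖ψ s‖ = ‖ψ s - ψ 0‖ := by rw [hψ0, sub_zero]
      _ ≤ δ * ‖s - 0‖ := this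
      _ ≤ δ * t := by
          rw [sub_zero, Real.norm_eq_abs, abs_of_nonneg hs.1]
          exact mul_le_mul_of_nonneg_left hs.2 hδ.le
  -- G s = h (γ s) - s^2/2 * q, with G' = ψ
  set G : ℝ → ℝ := fun s => h (γ s) - s ^ 2 / 2 * q with hG
  have hGd : ∀ s : ℝ, HasDerivAt G (ψ s) s := by
    intro s
    have h1 : HasDerivAt (fun s => h (γ s)) (D (γ s) v) s :=
      ((hdh (γ s)).hasFDerivAt).comp_hasDerivAt s (hγd s)
    have h2 : HasDerivAt (fun s : ℝ => s ^ 2 / 2 * q) (s * q) s := by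
      have := ((hasDerivAt_pow 2 s).div_const 2).mul_const q
      norm_num at this
      simpa using this
    exact h1.sub h2
  have := (convex_Icc (0:ℝ) t).norm_image_sub_le_of_norm_hasDerivWithin_le
    (fun s hs => (hGd s).hasDerivWithinAt) hψbound (Set.left_mem_Icc.mpr ht.le)
    (Set.right_mem_Icc.mpr ht.le)
  have hGt : G t - G 0 = h (xbar + t • v) - h xbar - t ^ 2 / 2 * q := by
    simp [hG, hγ]
    ring
  rw [hGt] at this
  calc |h (xbar + t • v) - h xbar - t ^ 2 / 2 * q| ≤ δ * t * ‖t - 0‖ := this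
    _ = δ * t ^ 2 := by
        rw [sub_zero, Real.norm_eq_abs, abs_of_pos ht]; ring

lemma taylor2_seq {N : ℕ} {h : Euc N → ℝ} (hh : ContDiff ℝ 2 h)
    (xbar : Euc N) (h0 : fderiv ℝ h xbar = 0)
    {t : ℕ → ℝ} {u : ℕ → Euc N} {uu : Euc N}
    (ht : ∀ k, 0 < t k) (hn : ∀ k, ‖u k‖ = 1)
    (ht0 : Tendsto t atTop (𝓝 0)) (hu : Tendsto u atTop (𝓝 uu)) :
    Tendsto (fun k => (h (xbar + t k • u k) - h xbar) / (t k ^ 2 / 2)) atTop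
      (𝓝 (fderiv ℝ (fderiv ℝ h) xbar uu uu)) := by
  set B := fderiv ℝ (fderiv ℝ h) xbar with hB
  have hBu : Tendsto (fun k => B (u k) (u k)) atTop (𝓝 (B uu uu)) := by
    have h1 : Tendsto (fun k => B (u k)) atTop (𝓝 (B uu)) := (B.continuous.tendsto _).comp hu
    exact (isBoundedBilinearMap_apply.continuous.tendsto (B uu, uu)).comp (h1.prodMk_nhds hu)
  have hkey : Tendsto
      (fun k => (h (xbar + t k • u k) - h xbar) / (t k ^ 2 / 2) - B (u k) (u k)) atTop (𝓝 0) := by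
    rw [NormedAddCommGroup.tendsto_nhds_zero]
    intro ε hε
    obtain ⟨r, hr, hest⟩ := taylor2_est hh xbar h0 (δ := ε / 4) (by positivity)
    have hev : ∀ᶠ k in atTop, t k < r := ht0.eventually_lt_const hr
    filter_upwards [hev] with k hk
    have htk := ht k
    have hne : t k ^ 2 / 2 ≠ 0 := by positivity
    have heq : (h (xbar + t k • u k) - h xbar) / (t k ^ 2 / 2) - B (u k) (u k)
        = (h (xbar + t k • u k) - h xbar - t k ^ 2 / 2 * (B (u k) (u k))) / (t k ^ 2 / 2) := by
      field_simp
    rw [heq, Real.norm_eq_abs, abs_div, abs_of_pos (by positivity : (0:ℝ) < t k ^ 2 / 2)]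
    rw [div_lt_iff₀ (by positivity)]
    calc |h (xbar + t k • u k) - h xbar - t k ^ 2 / 2 * (B (u k) (u k))|
        ≤ ε / 4 * t k ^ 2 := hest (t k) htk hk.le (u k) (hn k)
      _ < ε * (t k ^ 2 / 2) := by nlinarith [htk, hε, mul_pos (mul_pos hε htk) htk]
  have := hkey.add hBu
  simp only [zero_add] at this
  exact this.congr fun k => by ring


/-- Comparison of a liminf over a filter with a real limit along a sequence. -/
lemma liminf_le_coe_of_seq {α : Type*} {F : Filter α} (Q : α → EReal) {p : ℕ → α}
    (hp : Tendsto p atTop F) {r : ℕ → ℝ} {L : ℝ}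
    (hle : ∀ᶠ k in atTop, Q (p k) ≤ ((r k : ℝ) : EReal)) (hr : Tendsto r atTop (𝓝 L)) :
    liminf Q F ≤ ((L : ℝ) : EReal) := by
  have h1 : liminf Q F ≤ liminf Q (Filter.map p atTop) := liminf_le_liminf_of_le hp
  have h2 : liminf Q (Filter.map p atTop) = liminf (fun k => Q (p k)) atTop := by
    rw [Filter.liminf, Filter.liminf, Filter.map_map]; rfl
  have h3 : liminf (fun k => Q (p k)) atTop ≤ liminf (fun k => ((r k : ℝ) : EReal)) atTop :=
    liminf_le_liminf hle
  have h4 : liminf (fun k => ((r k : ℝ) : EReal)) atTop = ((L : ℝ) : EReal) :=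
    Filter.Tendsto.liminf_eq ((continuous_coe_real_ereal.tendsto L).comp hr)
  rw [h2] at h1
  exact h1.trans (h3.trans_eq h4)


theorem statement6 {n m : ℕ}
    (f : Euc n → ℝ) (c : Euc n → Euc m) (g : Euc m → EReal)
    (hf : ContDiff ℝ 2 f) (hc : ContDiff ℝ 2 c)
    (hgp : ProperFn g) (hglsc : LowerSemicontinuous g) (hgpb : ProxBounded g)
    (hphi : ∃ r : ℝ, (⨅ x : Euc n, ((f x : EReal) + g (c x))) = (r : EReal))
    (xbar : Euc n) (hfeas : c xbar ∈ edom g) (hsosc : SOSC f c g xbar) :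
    (∃ ε : ℝ, 0 < ε ∧ ∃ β : ℝ, 0 < β ∧ ∀ x : Euc n, ‖x - xbar‖ ≤ ε →
      ((f xbar : EReal) + g (c xbar)) + ((β / 2 * ‖x - xbar‖ ^ 2 : ℝ) : EReal)
        ≤ (f x : EReal) + g (c x)) ∧
      StrictLocalMin f c g xbar := by
  classical
  obtain ⟨abar, habar⟩ : ∃ a : ℝ, g (c xbar) = ((a : ℝ) : EReal) :=
    ⟨(g (c xbar)).toReal, (EReal.coe_toReal (LT.lt.ne hfeas) (hgp.1 _)).symm⟩
  have main : ∃ ε : ℝ, 0 < ε ∧ ∃ β : ℝ, 0 < β ∧ ∀ x : Euc n, ‖x - xbar‖ ≤ ε →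
      ((f xbar : EReal) + g (c xbar)) + ((β / 2 * ‖x - xbar‖ ^ 2 : ℝ) : EReal)
        ≤ (f x : EReal) + g (c x) := by
    by_contra hcon
    push_neg at hcon
    have hsel : ∀ k : ℕ, ∃ x : Euc n, ‖x - xbar‖ ≤ 1 / ((k : ℝ) + 1) ∧
        (f x : EReal) + g (c x) < ((f xbar : EReal) + g (c xbar)) +
          ((1 / ((k : ℝ) + 1) / 2 * ‖x - xbar‖ ^ 2 : ℝ) : EReal) := fun k =>
      hcon (1 / ((k : ℝ) + 1)) (by positivity) (1 / ((k : ℝ) + 1)) (by positivity)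
    choose x0 hx0a hx0b using hsel
    have hne : ∀ k, x0 k ≠ xbar := by
      intro k hEq
      have h := hx0b k
      rw [hEq, habar] at h
      simp at h
    have ht0pos : ∀ k, 0 < ‖x0 k - xbar‖ := fun k => norm_sub_pos_iff.mpr (hne k)
    set t0 : ℕ → ℝ := fun k => ‖x0 k - xbar‖ with ht0def
    set u0 : ℕ → Euc n := fun k => (t0 k)⁻¹ • (x0 k - xbar) with hu0def
    have hu0norm : ∀ k, ‖u0 k‖ = 1 := by
      intro k
      rw [hu0def]
      simp only [norm_smul, Real.norm_eq_abs, abs_of_pos (inv_pos.mpr (ht0pos k))]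
      rw [abs_of_pos (inv_pos.mpr (ht0pos k) : (0:ℝ) < (t0 k)⁻¹)]
      exact inv_mul_cancel₀ (ht0pos k).ne'
    have hu0mem : ∀ k, u0 k ∈ Metric.sphere (0 : Euc n) 1 := by
      intro k; simpa using hu0norm k
    obtain ⟨uu, huuS, φs, hφmono, hφtend⟩ :=
      (isCompact_sphere (0 : Euc n) 1).tendsto_subseq hu0mem
    have huu1 : ‖uu‖ = 1 := by simpa using huuS
    have ht0lim : Tendsto t0 atTop (𝓝 0) :=
      squeeze_zero (fun k => (ht0pos k).le) (fun k => hx0a k)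
        tendsto_one_div_add_atTop_nhds_zero_nat
    set T : ℕ → ℝ := fun k => t0 (φs k) with hTdef
    set U : ℕ → Euc n := fun k => u0 (φs k) with hUdef
    set X : ℕ → Euc n := fun k => x0 (φs k) with hXdef
    have hTpos : ∀ k, 0 < T k := fun k => ht0pos (φs k)
    have hUnorm : ∀ k, ‖U k‖ = 1 := fun k => hu0norm (φs k)
    have hTlim : Tendsto T atTop (𝓝 0) := ht0lim.comp hφmono.tendsto_atTop
    have hUlim : Tendsto U atTop (𝓝 uu) := hφtend
    have hXeq : ∀ k, X k = xbar + T k • U k := by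
      intro k
      rw [hXdef, hTdef, hUdef]
      simp only [hu0def]
      rw [smul_inv_smul₀ (ht0pos (φs k)).ne']
      abel
    -- real values of g along the sequence
    have hflt : ∀ k, (f (X k) : EReal) + g (c (X k)) <
        (((f xbar + abar + 1 / ((φs k : ℝ) + 1) / 2 * T k ^ 2 : ℝ)) : EReal) := by
      intro k
      have h := hx0b (φs k)
      rw [habar] at h
      have hrw : ((f xbar : ℝ) : EReal) + ((abar : ℝ) : EReal) +
          ((1 / ((φs k : ℝ) + 1) / 2 * ‖x0 (φs k) - xbar‖ ^ 2 : ℝ) : EReal)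
          = (((f xbar + abar + 1 / ((φs k : ℝ) + 1) / 2 * T k ^ 2 : ℝ)) : EReal) := by
        rw [hTdef]; simp only [ht0def]; norm_cast
      rw [← hrw]
      exact h
    have hgtop : ∀ k, g (c (X k)) ≠ ⊤ := by
      intro k hT
      have h := hflt k
      rw [hT] at h
      rw [EReal.add_top_of_ne_bot (EReal.coe_ne_bot _)] at h
      exact (not_top_lt) h
    have hga : ∀ k, g (c (X k)) = (((g (c (X k))).toReal : ℝ) : EReal) :=
      fun k => (EReal.coe_toReal (hgtop k) (hgp.1 _)).symm
    set a : ℕ → ℝ := fun k => (g (c (X k))).toReal with hadef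
    have ineq : ∀ k, f (X k) + a k <
        f xbar + abar + 1 / ((φs k : ℝ) + 1) / 2 * T k ^ 2 := by
      intro k
      have h := hflt k
      rw [hga k] at h
      rw [← EReal.coe_add] at h
      exact_mod_cast h
    -- the transformed constraint sequence
    set W : ℕ → Euc m := fun k => (T k)⁻¹ • (c (X k) - c xbar) with hWdef
    have hcW : ∀ k, c xbar + T k • W k = c (X k) := by
      intro k
      rw [hWdef]
      simp only
      rw [smul_inv_smul₀ (hTpos k).ne']
      abel
    have hWlim : Tendsto W atTop (𝓝 (fderiv ℝ c xbar uu)) := by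
      have h := tendsto_diffquot (hc.differentiable (by norm_num)) xbar hTpos hUnorm hTlim hUlim
      refine h.congr fun k => ?_
      rw [hWdef, ← hXeq k]
    have hPt : Tendsto T atTop (𝓝[>] (0 : ℝ)) :=
      tendsto_nhdsWithin_of_tendsto_nhds_of_eventually_within _ hTlim
        (Eventually.of_forall fun k => hTpos k)
    have hp2 : Tendsto (fun k => (T k, W k)) atTop ((𝓝[>] (0 : ℝ)) ×ˢ 𝓝 (fderiv ℝ c xbar uu)) :=
      hPt.prodMk hWlim
    have hνlim : Tendsto (fun k => 1 / ((φs k : ℝ) + 1)) atTop (𝓝 0) :=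
      tendsto_one_div_add_atTop_nhds_zero_nat.comp hφmono.tendsto_atTop
    -- criticality of uu
    have hflim : Tendsto (fun k => (f (X k) - f xbar) / T k) atTop
        (𝓝 (fderiv ℝ f xbar uu)) := by
      have h := tendsto_diffquot (hf.differentiable (by norm_num)) xbar hTpos hUnorm hTlim hUlim
      refine h.congr fun k => ?_
      rw [← hXeq k, smul_eq_mul]
      ring
    have hcrit : uu ∈ critCone f c g xbar := by
      have hsub : subderiv g (c xbar) (fderiv ℝ c xbar uu)
          ≤ ((-(fderiv ℝ f xbar uu) : ℝ) : EReal) := by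
        unfold subderiv
        refine liminf_le_coe_of_seq _ hp2
          (r := fun k => (f xbar - f (X k)) / T k + 1 / ((φs k : ℝ) + 1) / 2 * T k) ?_ ?_
        · refine Eventually.of_forall fun k => ?_
          show (g (c xbar + T k • W k) - g (c xbar)) / ((T k : ℝ) : EReal)
            ≤ (((f xbar - f (X k)) / T k + 1 / ((φs k : ℝ) + 1) / 2 * T k : ℝ) : EReal)
          rw [hcW k, hga k, habar, ← EReal.coe_sub, ← EReal.coe_div]
          rw [EReal.coe_le_coe_iff]
          rw [div_le_iff₀ (hTpos k)]
          have h := (ineq k).le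
          have ha : (g (c (X k))).toReal = a k := rfl
          have hdm : (f xbar - f (X k)) / T k * T k = f xbar - f (X k) :=
            div_mul_cancel₀ _ (hTpos k).ne'
          rw [add_mul, hdm, ha]
          nlinarith [h]
        · have h1 : Tendsto (fun k => (f xbar - f (X k)) / T k) atTop
              (𝓝 (-(fderiv ℝ f xbar uu))) := by
            have := hflim.neg
            refine this.congr fun k => ?_
            ring
          have h2 : Tendsto (fun k => 1 / ((φs k : ℝ) + 1) / 2 * T k) atTop (𝓝 0) := by
            have := (hνlim.div_const 2).mul hTlim
            simpa using this
          simpa using h1.add h2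
      show ((fderiv ℝ f xbar uu : ℝ) : EReal)
          + subderiv g (c xbar) (fderiv ℝ c xbar uu) ≤ 0
      calc ((fderiv ℝ f xbar uu : ℝ) : EReal) + subderiv g (c xbar) (fderiv ℝ c xbar uu)
          ≤ ((fderiv ℝ f xbar uu : ℝ) : EReal) + ((-(fderiv ℝ f xbar uu) : ℝ) : EReal) :=
            add_le_add le_rfl hsub
        _ = 0 := by rw [← EReal.coe_add]; norm_num
    -- apply SOSC
    obtain ⟨y, hy, hpos⟩ := hsosc uu hcrit (by
      intro h0
      rw [h0] at huu1
      simp at huu1)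
    obtain ⟨hgrad, -, -⟩ := hy
    have hLC : ContDiff ℝ 2 (LagFn f c y) := by
      unfold LagFn
      exact hf.add (ContDiff.inner ℝ contDiff_const hc)
    have hTay := taylor2_seq hLC xbar hgrad hTpos hUnorm hTlim hUlim
    have hHess : fderiv ℝ (fderiv ℝ (LagFn f c y)) xbar uu uu = hessLag f c xbar y uu uu := by
      rw [hessLag, iteratedFDeriv_two_apply]
      simp
    set H : ℝ := hessLag f c xbar y uu uu with hHdef
    have hLlim : Tendsto (fun k => (LagFn f c y (X k) - LagFn f c y xbar) / (T k ^ 2 / 2))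
        atTop (𝓝 H) := by
      rw [← hHess]
      refine hTay.congr fun k => ?_
      rw [← hXeq k]
    have hd2 : secondSubderiv g (c xbar) y (fderiv ℝ c xbar uu) ≤ ((-H : ℝ) : EReal) := by
      unfold secondSubderiv
      refine liminf_le_coe_of_seq _ hp2
        (r := fun k => -((LagFn f c y (X k) - LagFn f c y xbar) / (T k ^ 2 / 2))
          + 1 / ((φs k : ℝ) + 1)) ?_ ?_
      · refine Eventually.of_forall fun k => ?_
        show (g (c xbar + T k • W k) - g (c xbar) - ((T k * (inner ℝ y (W k) : ℝ) : ℝ) : EReal)) /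
              ((T k ^ 2 / 2 : ℝ) : EReal)
          ≤ ((-((LagFn f c y (X k) - LagFn f c y xbar) / (T k ^ 2 / 2))
              + 1 / ((φs k : ℝ) + 1) : ℝ) : EReal)
        rw [hcW k, hga k, habar, ← EReal.coe_sub, ← EReal.coe_sub, ← EReal.coe_div]
        rw [EReal.coe_le_coe_iff]
        have hinner : T k * (inner ℝ y (W k) : ℝ) = (inner ℝ y (c (X k) - c xbar) : ℝ) := by
          rw [← real_inner_smul_right, ← hcW k]
          congr 1
          abel
        have hL : LagFn f c y (X k) - LagFn f c y xbar
            = f (X k) - f xbar + (inner ℝ y (c (X k) - c xbar) : ℝ) := by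
          unfold LagFn
          rw [inner_sub_right]
          ring
        have hd : (0:ℝ) < T k ^ 2 / 2 := div_pos (pow_pos (hTpos k) 2) two_pos
        rw [div_le_iff₀ hd]
        have h := (ineq k).le
        have ha : (g (c (X k))).toReal = a k := rfl
        rw [hinner, hL]
        have hdm : (f (X k) - f xbar + (inner ℝ y (c (X k) - c xbar) : ℝ)) / (T k ^ 2 / 2)
            * (T k ^ 2 / 2) = f (X k) - f xbar + (inner ℝ y (c (X k) - c xbar) : ℝ) :=
          div_mul_cancel₀ _ hd.ne'
        rw [add_mul, neg_mul, hdm, ha]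
        nlinarith [h]
      · have h2 := hLlim.neg.add hνlim
        simpa using h2
    have hfin : ((H : ℝ) : EReal) + secondSubderiv g (c xbar) y (fderiv ℝ c xbar uu) ≤ 0 := by
      calc ((H : ℝ) : EReal) + secondSubderiv g (c xbar) y (fderiv ℝ c xbar uu)
          ≤ ((H : ℝ) : EReal) + ((-H : ℝ) : EReal) := add_le_add le_rfl hd2
        _ = 0 := by rw [← EReal.coe_add]; norm_num
    exact absurd (lt_of_lt_of_le hpos hfin) (lt_irrefl 0)
  obtain ⟨ε, hε, β, hβ, hmain⟩ := main
  refine ⟨⟨ε, hε, β, hβ, hmain⟩, hfeas, ε, hε, fun x hx _ hxne => ?_⟩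
  have hq : 0 < β / 2 * ‖x - xbar‖ ^ 2 := by
    have : 0 < ‖x - xbar‖ := norm_sub_pos_iff.mpr hxne
    positivity
  have h1 : ((f xbar : EReal) + g (c xbar)) < ((f xbar : EReal) + g (c xbar)) +
      ((β / 2 * ‖x - xbar‖ ^ 2 : ℝ) : EReal) := by
    rw [habar, ← EReal.coe_add, ← EReal.coe_add, EReal.coe_lt_coe_iff]
    linarith
  exact h1.trans_le (hmain x hx)


end Paper
end
end

section
/- Let x̄ ∈ ℝ^n be an M-stationary point of problem (P) and fix ȳ ∈ Λ(x̄). Assume the condition: for all u ∈ C(x̄) \ {0}, ∇²_{xx}L(x̄, ȳ)[u, u] + d²g(c(x̄), ȳ)(c'(x̄)u) > 0. Then SOSC holds at x̄ (for every u ∈ C(x̄) \ {0} there exists y ∈ Λ(x̄, u) with ∇²_{xx}L(x̄, y)[u, u] + d²g(c(x̄), y)(c'(x̄)u) > 0), and consequently there exist ε > 0 and β > 0 with φ(x) − φ(x̄) ≥ (β/2)‖x − x̄‖² for all x with ‖x − x̄‖ ≤ ε. -/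
open Filter Topology Bornology

noncomputable section

namespace Paper


lemma taylor2 {φ φ' φ'' : ℝ → ℝ}
    (h1 : ∀ t, HasDerivAt φ (φ' t) t) (h2 : ∀ t, HasDerivAt φ' (φ'' t) t)
    {T : ℝ} (hT : 0 < T) :
    ∃ s ∈ Set.Ioo 0 T, φ T - φ 0 - T * φ' 0 = φ'' s * T ^ 2 / 2 := by
  set K : ℝ := (φ T - φ 0 - T * φ' 0) / (T ^ 2 / 2) with hK
  have hT2 : (0:ℝ) < T ^ 2 / 2 := by positivity
  set h : ℝ → ℝ := fun t => φ t - φ 0 - t * φ' 0 - K / 2 * t ^ 2 with hh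
  set h' : ℝ → ℝ := fun t => φ' t - φ' 0 - K * t with hh'
  have hd : ∀ t, HasDerivAt h (h' t) t := by
    intro t
    have A := (h1 t).sub_const (φ 0)
    have B := (hasDerivAt_id t).mul_const (φ' 0)
    have C := (hasDerivAt_pow 2 t).const_mul (K / 2)
    have := (A.sub B).sub C
    refine this.congr_deriv ?_
    simp only [hh']; norm_num; ring
  have hd' : ∀ t, HasDerivAt h' (φ'' t - K) t := by
    intro t
    have B := (hasDerivAt_id t).const_mul K
    have := ((h2 t).sub_const (φ' 0)).sub B
    refine this.congr_deriv ?_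
    ring
  have hh0 : h 0 = 0 := by simp [hh]
  have hhT : h T = 0 := by
    simp only [hh, hK]
    field_simp
    ring
  obtain ⟨s1, hs1, hs1'⟩ := exists_hasDerivAt_eq_zero hT
    (fun t _ => (hd t).continuousAt.continuousWithinAt) (hh0.trans hhT.symm) (fun x _ => hd x)
  have hh'0 : h' 0 = 0 := by simp [hh']
  obtain ⟨s, hs, hs'⟩ := exists_hasDerivAt_eq_zero hs1.1
    (fun t _ => (hd' t).continuousAt.continuousWithinAt) (hh'0.trans hs1'.symm) (fun x _ => hd' x)
  refine ⟨s, ⟨hs.1, hs.2.trans hs1.2⟩, ?_⟩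
  have hsK : φ'' s = K := by linarith [hs']
  rw [hsK, hK]
  field_simp

lemma segment_taylor {n : ℕ} (ψ : Euc n → ℝ) (hψ : ContDiff ℝ 2 ψ) (x0 w : Euc n)
    {T : ℝ} (hT : 0 < T) :
    ∃ s ∈ Set.Ioo 0 T,
      ψ (x0 + T • w) - ψ x0 - T * fderiv ℝ ψ x0 w =
        fderiv ℝ (fderiv ℝ ψ) (x0 + s • w) w w * T ^ 2 / 2 := by
  have hdiff : Differentiable ℝ ψ := hψ.differentiable (by norm_num)
  have hψ1 : ContDiff ℝ 1 (fderiv ℝ ψ) := hψ.fderiv_right (by norm_num)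
  have hdiff1 : Differentiable ℝ (fderiv ℝ ψ) := hψ1.differentiable (by norm_num)
  have hA : ∀ t : ℝ, HasDerivAt (fun t : ℝ => x0 + t • w) w t := fun t => by
    simpa using ((hasDerivAt_id t).smul_const w).const_add x0
  have h1 : ∀ t : ℝ, HasDerivAt (fun t => ψ (x0 + t • w)) (fderiv ℝ ψ (x0 + t • w) w) t := fun t => by
    exact (hdiff _).hasFDerivAt.comp_hasDerivAt t (hA t)
  have h2 : ∀ t : ℝ, HasDerivAt (fun t => fderiv ℝ ψ (x0 + t • w) w)
      (fderiv ℝ (fderiv ℝ ψ) (x0 + t • w) w w) t := fun t => by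
    have hc : HasFDerivAt (fun x => fderiv ℝ ψ x w)
        ((fderiv ℝ (fderiv ℝ ψ) (x0 + t • w)).flip w) (x0 + t • w) := by
      have := (hdiff1 (x0 + t • w)).hasFDerivAt.clm_apply (hasFDerivAt_const w (x0 + t • w))
      simpa using this
    have := hc.comp_hasDerivAt t (hA t)
    simpa [Function.comp_def, ContinuousLinearMap.flip_apply] using this
  obtain ⟨s, hs, heq⟩ := taylor2 h1 h2 hT
  refine ⟨s, hs, ?_⟩
  simpa using heq

lemma dirderiv {n : ℕ} {F : Type*} [NormedAddCommGroup F] [NormedSpace ℝ F]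
    {ψ : Euc n → F} {x0 : Euc n} (hψ : DifferentiableAt ℝ ψ x0)
    {t : ℕ → ℝ} {u : ℕ → Euc n} {ubar : Euc n}
    (ht0 : ∀ k, 0 < t k) (ht : Tendsto t atTop (𝓝 0)) (hu : Tendsto u atTop (𝓝 ubar)) :
    Tendsto (fun k => (t k)⁻¹ • (ψ (x0 + t k • u k) - ψ x0)) atTop
      (𝓝 (fderiv ℝ ψ x0 ubar)) := by
  set L := fderiv ℝ ψ x0 with hL
  have hx : Tendsto (fun k => x0 + t k • u k) atTop (𝓝 x0) := by
    have h0 : Tendsto (fun k => t k • u k) atTop (𝓝 ((0:ℝ) • ubar)) := ht.smul hu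
    simpa using tendsto_const_nhds.add h0
  have hub : ∀ᶠ k in atTop, ‖u k‖ ≤ ‖ubar‖ + 1 := by
    have : Tendsto (fun k => ‖u k‖) atTop (𝓝 ‖ubar‖) := hu.norm
    exact this.eventually_le_const (by linarith)
  have hlo : (fun x => ψ x - ψ x0 - L (x - x0)) =o[𝓝 x0] fun x => x - x0 :=
    hψ.hasFDerivAt.isLittleO
  have hE : (fun k => ψ (x0 + t k • u k) - ψ x0 - L (t k • u k)) =o[atTop] fun k => t k • u k := by
    have := hlo.comp_tendsto hx
    simp only [Function.comp_def, add_sub_cancel_left] at this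
    exact this
  have htu : (fun k => t k • u k) =O[atTop] fun k => t k := by
    rw [Asymptotics.isBigO_iff]
    refine ⟨‖ubar‖ + 1, ?_⟩
    filter_upwards [hub] with k hk
    rw [norm_smul]
    have h1 : (0:ℝ) ≤ ‖t k‖ := norm_nonneg _
    nlinarith [norm_nonneg (u k)]
  have hE' : (fun k => ψ (x0 + t k • u k) - ψ x0 - L (t k • u k)) =o[atTop] fun k => t k :=
    hE.trans_isBigO htu
  have hterm1 : Tendsto (fun k => (t k)⁻¹ • (ψ (x0 + t k • u k) - ψ x0 - L (t k • u k)))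
      atTop (𝓝 0) := by
    have hq : Tendsto (fun k => ‖ψ (x0 + t k • u k) - ψ x0 - L (t k • u k)‖ / t k)
        atTop (𝓝 0) := hE'.norm_left.tendsto_div_nhds_zero
    refine squeeze_zero_norm (fun k => ?_) hq
    rw [norm_smul, norm_inv, Real.norm_eq_abs, abs_of_pos (ht0 k), inv_mul_eq_div]
  have hterm2 : Tendsto (fun k => L (u k)) atTop (𝓝 (L ubar)) :=
    (L.continuous.tendsto _).comp hu
  have heq : (fun k => (t k)⁻¹ • (ψ (x0 + t k • u k) - ψ x0)) =
      fun k => (t k)⁻¹ • (ψ (x0 + t k • u k) - ψ x0 - L (t k • u k)) + L (u k) := by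
    funext k
    have hne : t k ≠ 0 := (ht0 k).ne'
    have h3 : (t k)⁻¹ • (t k • L (u k)) = L (u k) := by
      rw [smul_smul, inv_mul_cancel₀ hne, one_smul]
    rw [L.map_smul, smul_sub ((t k)⁻¹) (ψ (x0 + t k • u k) - ψ x0) (t k • L (u k)), h3]
    abel
  rw [heq]
  simpa using hterm1.add hterm2

lemma liminf_le_seq {α : Type*} (u : α → EReal) {l : Filter α} {s : ℕ → α}
    (hs : Tendsto s atTop l) : liminf u l ≤ liminf (fun k => u (s k)) atTop := by
  have h := liminf_le_liminf_of_le (f := l) (g := map s atTop) (u := u) hs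
  calc liminf u l ≤ liminf u (map s atTop) := h
    _ = liminf (fun k => u (s k)) atTop := by
        unfold Filter.liminf
        rw [Filter.map_map]
        rfl

variable {n m : ℕ}

lemma liminf_le_seq' {α : Type*} (u : α → EReal) {l : Filter α} {s : ℕ → α}
    (hs : Tendsto s atTop l) {w : ℕ → EReal} (hw : ∀ k, u (s k) = w k) :
    liminf u l ≤ liminf w atTop := by
  have h := liminf_le_seq u hs
  rwa [show (fun k => u (s k)) = w from funext hw] at h

lemma lag_contDiff {n m : ℕ} {f : Euc n → ℝ} {c : Euc n → Euc m}
    (hf : ContDiff ℝ 2 f) (hc : ContDiff ℝ 2 c) (y : Euc m) :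
    ContDiff ℝ 2 (LagFn f c y) := by
  unfold LagFn
  exact hf.add (ContDiff.inner ℝ contDiff_const hc)

lemma lag_fderiv_apply {n m : ℕ} {f : Euc n → ℝ} {c : Euc n → Euc m}
    (hf : ContDiff ℝ 2 f) (hc : ContDiff ℝ 2 c) (y : Euc m) (x : Euc n) (u : Euc n) :
    fderiv ℝ (LagFn f c y) x u = fderiv ℝ f x u + (inner ℝ y (fderiv ℝ c x u) : ℝ) := by
  have h1 : HasFDerivAt (fun x => (inner ℝ y (c x) : ℝ))
      ((innerSL ℝ y).comp (fderiv ℝ c x)) x :=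
    (innerSL ℝ y).hasFDerivAt.comp x (hc.differentiable (by norm_num) x).hasFDerivAt
  have h2 : HasFDerivAt (LagFn f c y)
      (fderiv ℝ f x + (innerSL ℝ y).comp (fderiv ℝ c x)) x :=
    (hf.differentiable (by norm_num) x).hasFDerivAt.add h1
  rw [h2.fderiv]
  simp

lemma d2_bot {m : ℕ} {g : Euc m → EReal} {zbar v ybar : Euc m} {abar : ℝ}
    (hzb : g zbar = (abar : ℝ))
    (hlt : subderiv g zbar v < ((inner ℝ ybar v : ℝ) : EReal)) :
    secondSubderiv g zbar ybar v = ⊥ := by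
  set α : ℝ := (inner ℝ ybar v : ℝ) with hα
  obtain ⟨β, hβ1, hβ2⟩ := EReal.exists_between_coe_real hlt
  have hβα : β < α := by exact_mod_cast hβ2
  have hle : ∀ M : ℝ, secondSubderiv g zbar ybar v ≤ (M : EReal) := by
    intro M
    set δ : ℝ := (α - β) / (|M| + 1) with hδ
    have hM1 : (0:ℝ) < |M| + 1 := by positivity
    have hδpos : 0 < δ := div_pos (by linarith) hM1
    refine liminf_le_of_frequently_le' ?_
    have hβ1' : liminf (fun p : ℝ × Euc m =>
        (g (zbar + p.1 • p.2) - g zbar) / ((p.1 : ℝ) : EReal))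
        ((𝓝[>] (0 : ℝ)) ×ˢ 𝓝 v) < (β : EReal) := hβ1
    have hfreq := frequently_lt_of_liminf_lt (h := hβ1')
    have hev1 : ∀ᶠ p : ℝ × Euc m in (𝓝[>] (0:ℝ)) ×ˢ 𝓝 v, 0 < p.1 ∧ p.1 < δ := by
      have ha : ∀ᶠ t in 𝓝[>] (0:ℝ), 0 < t ∧ t < δ := by
        have h1 : ∀ᶠ t in 𝓝[>] (0:ℝ), t ∈ Set.Ioi (0:ℝ) := eventually_mem_nhdsWithin
        have h2 : ∀ᶠ t in 𝓝[>] (0:ℝ), t < δ :=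
          eventually_nhdsWithin_of_eventually_nhds (isOpen_Iio.eventually_mem hδpos)
        filter_upwards [h1, h2] with t ht1 ht2 using ⟨ht1, ht2⟩
      exact ha.prod_inl _
    have hev2 : ∀ᶠ p : ℝ × Euc m in (𝓝[>] (0:ℝ)) ×ˢ 𝓝 v,
        (α + β) / 2 < (inner ℝ ybar p.2 : ℝ) := by
      have hcont : Continuous fun z : Euc m => (inner ℝ ybar z : ℝ) :=
        continuous_const.inner continuous_id
      have : ∀ᶠ z in 𝓝 v, (α + β) / 2 < (inner ℝ ybar z : ℝ) := by
        have hopen : IsOpen {z : Euc m | (α + β) / 2 < (inner ℝ ybar z : ℝ)} :=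
          isOpen_lt continuous_const hcont
        exact hopen.eventually_mem (by rw [Set.mem_setOf_eq, ← hα]; linarith)
      exact this.prod_inr _
    refine (hfreq.and_eventually (hev1.and hev2)).mono ?_
    rintro ⟨t, z⟩ ⟨hq, ⟨ht0, htδ⟩, hγz⟩
    simp only at hq ht0 htδ hγz ⊢
    have ht0' : ((0:ℝ) : EReal) < (t : EReal) := by exact_mod_cast ht0
    have hΔ : g (zbar + t • z) - g zbar ≤ ((β * t : ℝ) : EReal) := by
      have h := (EReal.div_le_iff_le_mul ht0' (by simp)).1 hq.le
      rwa [← EReal.coe_mul, mul_comm t β] at h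
    set w : ℝ := (inner ℝ ybar z : ℝ) with hw
    have hreal : β * t - t * w ≤ M * (t ^ 2 / 2) := by
      have htδ' : t * (|M| + 1) < α - β := (lt_div_iff₀ hM1).1 htδ
      have h6 : -|M| * t ≤ M * t := mul_le_mul_of_nonneg_right (neg_abs_le M) ht0.le
      have h7 : t - (α - β) ≤ M * t := by nlinarith
      have h8 : (t - (α - β)) * t ≤ M * t * t := mul_le_mul_of_nonneg_right h7 ht0.le
      have h9 : t * ((α + β) / 2) < t * w := mul_lt_mul_of_pos_left hγz ht0
      nlinarith [h8, h9, sq_nonneg t]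
    have ht2 : ((0:ℝ) : EReal) < ((t ^ 2 / 2 : ℝ) : EReal) := by
      exact_mod_cast (by positivity : (0:ℝ) < t ^ 2 / 2)
    refine (EReal.div_le_iff_le_mul ht2 (by simp)).2 ?_
    calc g (zbar + t • z) - g zbar - ((t * w : ℝ) : EReal)
        ≤ ((β * t : ℝ) : EReal) - ((t * w : ℝ) : EReal) := EReal.sub_le_sub hΔ le_rfl
      _ = ((β * t - t * w : ℝ) : EReal) := (EReal.coe_sub _ _).symm
      _ ≤ ((M * (t ^ 2 / 2) : ℝ) : EReal) := by exact_mod_cast hreal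
      _ = ((t ^ 2 / 2 : ℝ) : EReal) * (M : EReal) := by
          rw [mul_comm, EReal.coe_mul]
  by_contra hbot
  obtain ⟨M, hM1, hM2⟩ := EReal.exists_between_coe_real (bot_lt_iff_ne_bot.2 hbot)
  exact absurd (hle M) (not_le.2 hM2)

theorem statement7 {n m : ℕ}
    (f : Euc n → ℝ) (c : Euc n → Euc m) (g : Euc m → EReal)
    (hf : ContDiff ℝ 2 f) (hc : ContDiff ℝ 2 c)
    (hgp : ProperFn g) (hglsc : LowerSemicontinuous g) (hgpb : ProxBounded g)
    (hphi : ∃ r : ℝ, (⨅ x : Euc n, ((f x : EReal) + g (c x))) = (r : EReal))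
    (xbar : Euc n) (ybar : Euc m) (hybar : ybar ∈ Lambda f c g xbar)
    (hcond : ∀ u ∈ critCone f c g xbar, u ≠ 0 →
      0 < ((hessLag f c xbar ybar u u : ℝ) : EReal) +
        secondSubderiv g (c xbar) ybar (fderiv ℝ c xbar u)) :
    SOSC f c g xbar ∧
      ∃ ε : ℝ, 0 < ε ∧ ∃ β : ℝ, 0 < β ∧ ∀ x : Euc n, ‖x - xbar‖ ≤ ε →
        ((f xbar : EReal) + g (c xbar)) + ((β / 2 * ‖x - xbar‖ ^ 2 : ℝ) : EReal)
          ≤ (f x : EReal) + g (c x) := by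
  obtain ⟨hgrad, hsub⟩ := hybar
  rcases subsingleton_or_nontrivial (Euc n) with hns | hnt
  · constructor
    · intro u hu hune
      exact absurd (Subsingleton.elim u 0) hune
    · refine ⟨1, one_pos, 1, one_pos, fun x hx => ?_⟩
      have hxx : x = xbar := Subsingleton.elim x xbar
      subst hxx
      simp
  by_cases hgt : g (c xbar) = ⊤
  · exfalso
    obtain ⟨u, hu⟩ := exists_ne (0 : Euc n)
    set v0 : Euc m := fderiv ℝ c xbar u with hv0
    have hflt : ∀ᶠ p : ℝ × Euc m in (𝓝[>] (0:ℝ)) ×ˢ 𝓝 v0, 0 < p.1 :=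
      (eventually_mem_nhdsWithin.mono fun t ht => ht).prod_inl _
    have hdg : subderiv g (c xbar) v0 = ⊥ := by
      have hev : ∀ᶠ p : ℝ × Euc m in (𝓝[>] (0:ℝ)) ×ˢ 𝓝 v0,
          (g (c xbar + p.1 • p.2) - g (c xbar)) / ((p.1 : ℝ) : EReal) = (⊥ : EReal) := by
        filter_upwards [hflt] with p hp
        rw [hgt, EReal.sub_top]
        exact EReal.bot_div_of_pos_ne_top (by exact_mod_cast hp) (by simp)
      have h2 : subderiv g (c xbar) v0 =
          liminf (fun _ : ℝ × Euc m => (⊥ : EReal)) ((𝓝[>] (0:ℝ)) ×ˢ 𝓝 v0) :=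
        liminf_congr hev
      rw [h2, liminf_const]
    have hd2 : secondSubderiv g (c xbar) ybar v0 = ⊥ := by
      have hev : ∀ᶠ p : ℝ × Euc m in (𝓝[>] (0:ℝ)) ×ˢ 𝓝 v0,
          (g (c xbar + p.1 • p.2) - g (c xbar) -
            ((p.1 * (inner ℝ ybar p.2 : ℝ) : ℝ) : EReal)) / ((p.1 ^ 2 / 2 : ℝ) : EReal)
            = (⊥ : EReal) := by
        filter_upwards [hflt] with p hp
        rw [hgt, EReal.sub_top, EReal.bot_sub]
        exact EReal.bot_div_of_pos_ne_top
          (by exact_mod_cast (by positivity : (0:ℝ) < p.1 ^ 2 / 2)) (by simp)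
      have h2 : secondSubderiv g (c xbar) ybar v0 =
          liminf (fun _ : ℝ × Euc m => (⊥ : EReal)) ((𝓝[>] (0:ℝ)) ×ˢ 𝓝 v0) :=
        liminf_congr hev
      rw [h2, liminf_const]
    have hcrit : u ∈ critCone f c g xbar := by
      show ((fderiv ℝ f xbar u : ℝ) : EReal) + subderiv g (c xbar) (fderiv ℝ c xbar u) ≤ 0
      rw [← hv0, hdg, EReal.add_bot]
      exact bot_le
    have := hcond u hcrit hu
    rw [← hv0, hd2, EReal.add_bot] at this
    exact not_lt_bot this
  -- main case : g (c xbar) is a real number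
  have hgb : g (c xbar) ≠ ⊥ := hgp.1 _
  set abar : ℝ := (g (c xbar)).toReal with habar
  have hab : g (c xbar) = ((abar : ℝ) : EReal) := (EReal.coe_toReal hgt hgb).symm
  have hLfd : ∀ x u, fderiv ℝ (LagFn f c ybar) x u =
      fderiv ℝ f x u + (inner ℝ ybar (fderiv ℝ c x u) : ℝ) :=
    fun x u => lag_fderiv_apply hf hc ybar x u
  have hgrad0 : ∀ w : Euc n, fderiv ℝ (LagFn f c ybar) xbar w = 0 := by
    intro w
    rw [hgrad]
    rfl
  have hlin : ∀ u : Euc n, fderiv ℝ f xbar u = -(inner ℝ ybar (fderiv ℝ c xbar u) : ℝ) := by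
    intro u
    have h1 := hLfd xbar u
    rw [hgrad0 u] at h1
    linarith
  -- Part 1 : SOSC
  have hsosc : SOSC f c g xbar := by
    intro u hu hune
    have hpos := hcond u hu hune
    have hd2ne : secondSubderiv g (c xbar) ybar (fderiv ℝ c xbar u) ≠ ⊥ := by
      intro h
      rw [h, EReal.add_bot] at hpos
      exact not_lt_bot hpos
    have hdle : subderiv g (c xbar) (fderiv ℝ c xbar u) ≤
        ((inner ℝ ybar (fderiv ℝ c xbar u) : ℝ) : EReal) := by
      have h1 : ((fderiv ℝ f xbar u : ℝ) : EReal) +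
          subderiv g (c xbar) (fderiv ℝ c xbar u) ≤ 0 := hu
      have h2 := add_le_add_right h1 ((-(fderiv ℝ f xbar u) : ℝ) : EReal)
      rw [← add_assoc, ← EReal.coe_add, neg_add_cancel, EReal.coe_zero, zero_add,
        add_zero] at h2
      rw [hlin u, neg_neg] at h2
      exact h2
    have heq : subderiv g (c xbar) (fderiv ℝ c xbar u) =
        ((inner ℝ ybar (fderiv ℝ c xbar u) : ℝ) : EReal) := by
      rcases eq_or_lt_of_le hdle with h | h
      · exact h
      · exact absurd (d2_bot hab h) hd2ne
    exact ⟨ybar, ⟨hgrad, heq, hd2ne⟩, hpos⟩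
  refine ⟨hsosc, ?_⟩
  -- Part 2 : quadratic growth, by contradiction
  by_contra hcon
  push_neg at hcon
  have key : ∀ k : ℕ, ∃ x : Euc n, ‖x - xbar‖ ≤ 1 / (k + 1 : ℝ) ∧
      (f x : EReal) + g (c x) <
        ((f xbar : EReal) + g (c xbar)) +
          (((1 / (k + 1 : ℝ)) / 2 * ‖x - xbar‖ ^ 2 : ℝ) : EReal) := by
    intro k
    exact hcon (1 / (k + 1 : ℝ)) (by positivity) (1 / (k + 1 : ℝ)) (by positivity)
  choose xs hxs1 hxs2 using key
  set t : ℕ → ℝ := fun k => ‖xs k - xbar‖ with htdef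
  have hgxne : ∀ k, g (c (xs k)) ≠ ⊤ := by
    intro k h
    have h2 := hxs2 k
    rw [h, hab, EReal.coe_add_top, ← EReal.coe_add, ← EReal.coe_add] at h2
    exact not_top_lt h2
  set A : ℕ → ℝ := fun k => (g (c (xs k))).toReal with hA
  have hgx : ∀ k, g (c (xs k)) = ((A k : ℝ) : EReal) :=
    fun k => (EReal.coe_toReal (hgxne k) (hgp.1 _)).symm
  have hk : ∀ k, f (xs k) + A k < f xbar + abar + (1 / (k + 1 : ℝ)) / 2 * (t k) ^ 2 := by
    intro k
    have h := hxs2 k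
    rw [hgx k, hab] at h
    exact_mod_cast h
  have ht0 : ∀ k, 0 < t k := by
    intro k
    rcases (norm_nonneg (xs k - xbar)).lt_or_eq with h | h
    · exact h
    · exfalso
      have hx0 : xs k = xbar := sub_eq_zero.1 (norm_eq_zero.1 h.symm)
      have hAk : A k = abar := by
        show (g (c (xs k))).toReal = (g (c xbar)).toReal
        rw [hx0]
      have htk : t k = 0 := by rw [htdef]; simp [hx0]
      have h2 := hk k
      rw [hx0, hAk, htk] at h2
      nlinarith [h2]
  have htlim : Tendsto t atTop (𝓝 0) :=
    squeeze_zero (fun k => (ht0 k).le) hxs1 tendsto_one_div_add_atTop_nhds_zero_nat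
  set u : ℕ → Euc n := fun k => (t k)⁻¹ • (xs k - xbar) with hudef
  have hxu : ∀ k, xbar + t k • u k = xs k := by
    intro k
    rw [hudef]
    simp only
    rw [smul_inv_smul₀ (ht0 k).ne']
    abel
  have humem : ∀ k, u k ∈ Metric.sphere (0 : Euc n) 1 := by
    intro k
    rw [mem_sphere_zero_iff_norm, hudef]
    simp only
    rw [norm_smul, norm_inv, Real.norm_eq_abs, abs_of_pos (ht0 k)]
    exact inv_mul_cancel₀ (ht0 k).ne'
  obtain ⟨ub, hubmem, σ, hσmono, hσtend⟩ :=
    (isCompact_sphere (0 : Euc n) 1).tendsto_subseq humem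
  have hubnorm : ‖ub‖ = 1 := mem_sphere_zero_iff_norm.1 hubmem
  have hune : ub ≠ 0 := by
    intro h
    rw [h, norm_zero] at hubnorm
    exact one_ne_zero hubnorm.symm
  have hσt : Tendsto σ atTop atTop := hσmono.tendsto_atTop
  have hTlim : Tendsto (fun k => t (σ k)) atTop (𝓝 0) := htlim.comp hσt
  have hUlim : Tendsto (fun k => u (σ k)) atTop (𝓝 ub) := hσtend
  -- second order expansion of the Lagrangian
  set ψ : Euc n → ℝ := LagFn f c ybar with hψdef
  have hψ : ContDiff ℝ 2 ψ := lag_contDiff hf hc ybar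
  have hψ1 : ContDiff ℝ 1 (fderiv ℝ ψ) := hψ.fderiv_right (by norm_num)
  have hD2cont : Continuous (fun x => fderiv ℝ (fderiv ℝ ψ) x) :=
    (hψ1.fderiv_right (m := 0) (by norm_num)).continuous
  have htay : ∀ k, ∃ s ∈ Set.Ioo (0:ℝ) (t (σ k)),
      ψ (xbar + t (σ k) • u (σ k)) - ψ xbar - t (σ k) * fderiv ℝ ψ xbar (u (σ k)) =
        fderiv ℝ (fderiv ℝ ψ) (xbar + s • u (σ k)) (u (σ k)) (u (σ k)) * t (σ k) ^ 2 / 2 :=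
    fun k => segment_taylor ψ hψ xbar (u (σ k)) (ht0 (σ k))
  choose s hsIoo htays using htay
  set Qk : ℕ → ℝ := fun k =>
    fderiv ℝ (fderiv ℝ ψ) (xbar + s k • u (σ k)) (u (σ k)) (u (σ k)) with hQkdef
  have htay' : ∀ k, ψ (xbar + t (σ k) • u (σ k)) - ψ xbar = Qk k * t (σ k) ^ 2 / 2 := by
    intro k
    have h := htays k
    rw [hψdef] at h ⊢
    rw [hgrad0 (u (σ k)), mul_zero, sub_zero] at h
    exact h
  have hslim : Tendsto s atTop (𝓝 0) :=
    squeeze_zero (fun k => (hsIoo k).1.le) (fun k => (hsIoo k).2.le) hTlim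
  have hξ : Tendsto (fun k => xbar + s k • u (σ k)) atTop (𝓝 xbar) := by
    have h0 : Tendsto (fun k => s k • u (σ k)) atTop (𝓝 ((0:ℝ) • ub)) := hslim.smul hUlim
    simpa using tendsto_const_nhds.add h0
  set Q : ℝ := fderiv ℝ (fderiv ℝ ψ) xbar ub ub with hQdef
  have hQk : Tendsto Qk atTop (𝓝 Q) := by
    have hcont2 : Continuous (fun p : Euc n × Euc n =>
        fderiv ℝ (fderiv ℝ ψ) p.1 p.2 p.2) :=
      ((hD2cont.comp continuous_fst).clm_apply continuous_snd).clm_apply continuous_snd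
    have h := (hcont2.tendsto (xbar, ub)).comp (hξ.prodMk_nhds hUlim)
    exact h
  have hhess : hessLag f c xbar ybar ub ub = Q := by
    unfold hessLag
    rw [← hψdef, iteratedFDeriv_two_apply]
    simp [hQdef]
  -- directional derivative limits
  have hflim : Tendsto
      (fun k => (t (σ k))⁻¹ • (f (xbar + t (σ k) • u (σ k)) - f xbar)) atTop
      (𝓝 (fderiv ℝ f xbar ub)) :=
    dirderiv (hf.differentiable (by norm_num) xbar) (fun k => ht0 (σ k)) hTlim hUlim
  set v : ℕ → Euc m := fun k => (t (σ k))⁻¹ • (c (xbar + t (σ k) • u (σ k)) - c xbar)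
    with hvdef
  have hVlim : Tendsto v atTop (𝓝 (fderiv ℝ c xbar ub)) :=
    dirderiv (hc.differentiable (by norm_num) xbar) (fun k => ht0 (σ k)) hTlim hUlim
  have hcv : ∀ k, c xbar + t (σ k) • v k = c (xbar + t (σ k) • u (σ k)) := by
    intro k
    rw [hvdef]
    simp only
    rw [smul_inv_smul₀ (ht0 (σ k)).ne']
    abel
  have hseq : Tendsto (fun k => ((t (σ k), v k) : ℝ × Euc m)) atTop
      ((𝓝[>] (0:ℝ)) ×ˢ 𝓝 (fderiv ℝ c xbar ub)) := by
    refine Tendsto.prodMk ?_ hVlim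
    exact tendsto_nhdsWithin_of_tendsto_nhds_of_eventually_within _ hTlim
      (Eventually.of_forall fun k => ht0 (σ k))
  have hδlim : Tendsto (fun k => (1 / ((σ k : ℝ) + 1)) / 2) atTop (𝓝 0) := by
    have h1 : Tendsto (fun k => 1 / ((σ k : ℝ) + 1)) atTop (𝓝 0) :=
      tendsto_one_div_add_atTop_nhds_zero_nat.comp hσt
    simpa using h1.div_const 2
  have hXk : ∀ k, f (xbar + t (σ k) • u (σ k)) + A (σ k) <
      f xbar + abar + (1 / ((σ k : ℝ) + 1)) / 2 * (t (σ k)) ^ 2 := by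
    intro k
    have h := hk (σ k)
    rwa [← hxu (σ k)] at h
  -- the critical cone contains ub
  have hsub_le : subderiv g (c xbar) (fderiv ℝ c xbar ub) ≤
      ((-(fderiv ℝ f xbar ub) : ℝ) : EReal) := by
    set p : ℕ → ℝ := fun k => (A (σ k) - abar) / t (σ k) with hpdef
    have hval : ∀ k, (g (c xbar + (t (σ k)) • (v k)) - g (c xbar)) /
        ((t (σ k) : ℝ) : EReal) = ((p k : ℝ) : EReal) := by
      intro k
      rw [hcv k, hxu (σ k), hgx (σ k), hab, ← EReal.coe_sub, ← EReal.coe_div]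
    have h1 : subderiv g (c xbar) (fderiv ℝ c xbar ub) ≤
        liminf (fun k => ((p k : ℝ) : EReal)) atTop :=
      liminf_le_seq' (fun pp : ℝ × Euc m =>
        (g (c xbar + pp.1 • pp.2) - g (c xbar)) / ((pp.1 : ℝ) : EReal)) hseq hval
    set r : ℕ → ℝ := fun k =>
      -((t (σ k))⁻¹ • (f (xbar + t (σ k) • u (σ k)) - f xbar)) +
        (1 / ((σ k : ℝ) + 1)) / 2 * t (σ k) with hrdef
    have hpr : ∀ k, p k ≤ r k := by
      intro k
      have hXk' := hXk k
      rw [hpdef, hrdef]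
      simp only [smul_eq_mul]
      rw [div_le_iff₀ (ht0 (σ k))]
      have he : (-((t (σ k))⁻¹ * (f (xbar + t (σ k) • u (σ k)) - f xbar)) +
          (1 / ((σ k : ℝ) + 1)) / 2 * t (σ k)) * t (σ k) =
          -(f (xbar + t (σ k) • u (σ k)) - f xbar) +
            (1 / ((σ k : ℝ) + 1)) / 2 * t (σ k) ^ 2 := by
        field_simp [(ht0 (σ k)).ne']
      rw [he]
      linarith
    have hrlim : Tendsto (fun k => ((r k : ℝ) : EReal)) atTop
        (𝓝 ((-(fderiv ℝ f xbar ub) : ℝ) : EReal)) := by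
      rw [EReal.tendsto_coe]
      have hm : Tendsto (fun k => (1 / ((σ k : ℝ) + 1)) / 2 * t (σ k)) atTop (𝓝 0) := by
        simpa using hδlim.mul hTlim
      have h2 := hflim.neg.add hm
      rw [add_zero] at h2
      exact h2
    calc subderiv g (c xbar) (fderiv ℝ c xbar ub)
        ≤ liminf (fun k => ((p k : ℝ) : EReal)) atTop := h1
      _ ≤ liminf (fun k => ((r k : ℝ) : EReal)) atTop := by
          refine liminf_le_liminf (Eventually.of_forall fun k => ?_)
          exact_mod_cast hpr k
      _ = ((-(fderiv ℝ f xbar ub) : ℝ) : EReal) := hrlim.liminf_eq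
  have hcrit : ub ∈ critCone f c g xbar := by
    show ((fderiv ℝ f xbar ub : ℝ) : EReal) +
        subderiv g (c xbar) (fderiv ℝ c xbar ub) ≤ 0
    calc ((fderiv ℝ f xbar ub : ℝ) : EReal) +
        subderiv g (c xbar) (fderiv ℝ c xbar ub)
        ≤ ((fderiv ℝ f xbar ub : ℝ) : EReal) + ((-(fderiv ℝ f xbar ub) : ℝ) : EReal) :=
          add_le_add_right hsub_le _
      _ = 0 := by rw [← EReal.coe_add]; norm_num
  -- bound on the second subderivative
  have hd2le : secondSubderiv g (c xbar) ybar (fderiv ℝ c xbar ub) ≤ ((-Q : ℝ) : EReal) := by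
    set q : ℕ → ℝ := fun k =>
      (A (σ k) - abar - t (σ k) * (inner ℝ ybar (v k) : ℝ)) / ((t (σ k)) ^ 2 / 2) with hqdef
    have hval : ∀ k, (g (c xbar + (t (σ k)) • (v k)) - g (c xbar) -
        ((t (σ k) * (inner ℝ ybar (v k) : ℝ) : ℝ) : EReal)) /
        (((t (σ k)) ^ 2 / 2 : ℝ) : EReal) = ((q k : ℝ) : EReal) := by
      intro k
      rw [hcv k, hxu (σ k), hgx (σ k), hab, ← EReal.coe_sub, ← EReal.coe_sub,
        ← EReal.coe_div]
    have h1 : secondSubderiv g (c xbar) ybar (fderiv ℝ c xbar ub) ≤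
        liminf (fun k => ((q k : ℝ) : EReal)) atTop :=
      liminf_le_seq' (fun pp : ℝ × Euc m =>
        (g (c xbar + pp.1 • pp.2) - g (c xbar) -
          ((pp.1 * (inner ℝ ybar pp.2 : ℝ) : ℝ) : EReal)) /
          ((pp.1 ^ 2 / 2 : ℝ) : EReal)) hseq hval
    set r : ℕ → ℝ := fun k => -Qk k + 2 * ((1 / ((σ k : ℝ) + 1)) / 2) with hrdef
    have hqr : ∀ k, q k ≤ r k := by
      intro k
      have hXk' := hXk k
      have hiw : t (σ k) * (inner ℝ ybar (v k) : ℝ) =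
          (inner ℝ ybar (c (xbar + t (σ k) • u (σ k))) : ℝ) -
            (inner ℝ ybar (c xbar) : ℝ) := by
        rw [← real_inner_smul_right]
        have h2 : t (σ k) • v k = c (xbar + t (σ k) • u (σ k)) - c xbar := by
          have := hcv k
          have h3 : t (σ k) • v k = c xbar + t (σ k) • v k - c xbar := by abel
          rw [h3, this]
        rw [h2, inner_sub_right]
      have hψX : ψ (xbar + t (σ k) • u (σ k)) =
          f (xbar + t (σ k) • u (σ k)) +
            (inner ℝ ybar (c (xbar + t (σ k) • u (σ k))) : ℝ) := rfl
      have hψb : ψ xbar = f xbar + (inner ℝ ybar (c xbar) : ℝ) := rfl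
      have he4 := htay' k
      rw [hqdef, hrdef]
      simp only
      rw [div_le_iff₀ (by have := ht0 (σ k); positivity : (0:ℝ) < (t (σ k)) ^ 2 / 2)]
      have he : (-Qk k + 2 * ((1 / ((σ k : ℝ) + 1)) / 2)) * ((t (σ k)) ^ 2 / 2) =
          -(Qk k * (t (σ k)) ^ 2 / 2) + (1 / ((σ k : ℝ) + 1)) / 2 * (t (σ k)) ^ 2 := by
        ring
      rw [he, hiw]
      rw [hψX, hψb] at he4
      linarith
    have hrlim : Tendsto (fun k => ((r k : ℝ) : EReal)) atTop (𝓝 ((-Q : ℝ) : EReal)) := by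
      rw [EReal.tendsto_coe]
      have hm : Tendsto (fun k => 2 * ((1 / ((σ k : ℝ) + 1)) / 2)) atTop (𝓝 0) := by
        simpa using hδlim.const_mul 2
      have h2 := hQk.neg.add hm
      rw [add_zero] at h2
      exact h2
    calc secondSubderiv g (c xbar) ybar (fderiv ℝ c xbar ub)
        ≤ liminf (fun k => ((q k : ℝ) : EReal)) atTop := h1
      _ ≤ liminf (fun k => ((r k : ℝ) : EReal)) atTop := by
          refine liminf_le_liminf (Eventually.of_forall fun k => ?_)
          exact_mod_cast hqr k
      _ = ((-Q : ℝ) : EReal) := hrlim.liminf_eq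
  -- contradiction with hcond
  have hfin := hcond ub hcrit hune
  have hle0 : ((hessLag f c xbar ybar ub ub : ℝ) : EReal) +
      secondSubderiv g (c xbar) ybar (fderiv ℝ c xbar ub) ≤ 0 := by
    calc ((hessLag f c xbar ybar ub ub : ℝ) : EReal) +
        secondSubderiv g (c xbar) ybar (fderiv ℝ c xbar ub)
        ≤ ((hessLag f c xbar ybar ub ub : ℝ) : EReal) + ((-Q : ℝ) : EReal) :=
          add_le_add_right hd2le _
      _ = 0 := by rw [hhess, ← EReal.coe_add]; norm_num
  exact absurd hfin (not_lt.2 hle0)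



end Paper
end
end
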